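/- arXiv:1505.05006 — 3 statements merged into one kernel-verified Lean document; each statement's English description precedes it below -/
import Mathlib

section
/- Let (X_k^i)_{i∈ℤ, k∈ℕ} be i.i.d. random variables with P(X_k^i = 1) = p = 1 − P(X_k^i = −1) for some p ∈ [1/2, 1], and let S_n^i = Σ_{k=1}^n X_k^i. Then almost surely (1/n) · min_{i ∈ {−n, …, n}} S_n^i converges to 2p − 1 as n → ∞. -/
open MeasureTheory ProbabilityTheory Filter
open scoped ENNReal NNReal Topology

/-- The trajectory attached to the frog starting at site `i`:
`frogS X ω i n = ∑_{k=1}^n X_k^i(ω)` is its displacement `n` steps after its activation. -/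
def frogS {Ω : Type*} (X : ℤ → ℕ → Ω → ℤ) (ω : Ω) (i : ℤ) (n : ℕ) : ℤ :=
  ∑ k ∈ Finset.Icc 1 n, X i k ω

/-- First time (as an element of `ℕ∞`) at which the walk attached to frog `j`
(which starts at `j`) visits site `i`. -/
noncomputable def hitTime (S : ℤ → ℕ → ℤ) (j i : ℤ) : ℕ∞ :=
  sInf {t : ℕ∞ | ∃ n : ℕ, t = n ∧ j + S j n = i}

/-- Activation time `T_i` of the frog initially at site `i`, in the frog model with one
active frog at `0` and one sleeping frog at every other site: since every activated frog
follows its attached trajectory from its activation time onwards, `T_i` is the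
first-passage-percolation infimum over activation chains `0 = c 0, c 1, …, c m = i` of the
sums of the successive hitting times.  This is the (unique, canonical) solution of
`T_0 = 0`, `T_i = inf {n ∈ ℕ : ∃ j, T_j ≤ n ∧ j + S^j_{n - T_j} = i}`. -/
noncomputable def frogT (S : ℤ → ℕ → ℤ) (i : ℤ) : ℕ∞ :=
  sInf {t : ℕ∞ | ∃ (m : ℕ) (c : ℕ → ℤ), c 0 = 0 ∧ c m = i ∧
    t = ∑ l ∈ Finset.range m, hitTime S (c l) (c (l + 1))}

/-- Activation times `T_i⁺` in the frog model without negative frogs (one active frog at `0`,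
one sleeping frog at every positive integer site and no frogs at negative sites):
only activation chains staying in the non-negative integers are available. -/
noncomputable def frogTplus (S : ℤ → ℕ → ℤ) (i : ℤ) : ℕ∞ :=
  sInf {t : ℕ∞ | ∃ (m : ℕ) (c : ℕ → ℤ), c 0 = 0 ∧ c m = i ∧ (∀ l ≤ m, 0 ≤ c l) ∧
    t = ∑ l ∈ Finset.range m, hitTime S (c l) (c (l + 1))}

/-- Position `Z_n^i` of frog `i` at time `n`: it sits at `i` until its activation time and
then follows its attached trajectory. -/
noncomputable def frogZ (S : ℤ → ℕ → ℤ) (n : ℕ) (i : ℤ) : ℤ :=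
  if frogT S i ≤ (n : ℕ∞) then i + S i (n - (frogT S i).toNat) else i

/-- `M_n`, the maximum of the positions of the active frogs at time `n`. -/
noncomputable def frogM (S : ℤ → ℕ → ℤ) (n : ℕ) : ℤ :=
  sSup {z : ℤ | ∃ i : ℤ, frogT S i ≤ (n : ℕ∞) ∧ frogZ S n i = z}

/-- `m_n`, the minimum of the positions of the active frogs at time `n`. -/
noncomputable def frogm (S : ℤ → ℕ → ℤ) (n : ℕ) : ℤ :=
  sInf {z : ℤ | ∃ i : ℤ, frogT S i ≤ (n : ℕ∞) ∧ frogZ S n i = z}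

/-- The set `A_n` of active frogs at time `n`, as a `Finset`.  (Activation spreads with
speed at most one, so all active frogs lie in `[-n, n]`.) -/
noncomputable def frogA (S : ℤ → ℕ → ℤ) (n : ℕ) : Finset ℤ :=
  (Finset.Icc (-(n : ℤ)) n).filter fun i => frogT S i ≤ (n : ℕ∞)

/-- The random input of the frog model on `ℤ` with drift parameter `p`: an i.i.d. family
`(X_k^i)_{i ∈ ℤ, k ∈ ℕ}` with `P(X_k^i = 1) = p = 1 - P(X_k^i = -1)`. -/
structure IsFrogModel {Ω : Type*} [MeasurableSpace Ω] (P : Measure Ω)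
    (X : ℤ → ℕ → Ω → ℤ) (p : ℝ) : Prop where
  meas : ∀ i k, Measurable (X i k)
  indep : iIndepFun (fun ik : ℤ × ℕ => X ik.1 ik.2) P
  prob_one : ∀ i k, P {ω | X i k ω = 1} = ENNReal.ofReal p
  prob_neg_one : ∀ i k, P {ω | X i k ω = -1} = ENNReal.ofReal (1 - p)

lemma aux_deriv (p c : ℝ) :
    HasDerivAt (fun u : ℝ => p * Real.exp (u * (c - 1)) + (1 - p) * Real.exp (u * (c + 1)))
      (c - (2 * p - 1)) 0 := by
  have h1 : HasDerivAt (fun u : ℝ => Real.exp (u * (c - 1))) ((c-1) * Real.exp (0 * (c-1))) 0 := by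
    simpa using (HasDerivAt.exp (hasDerivAt_id 0 |>.mul_const (c-1)))
  have h2 : HasDerivAt (fun u : ℝ => Real.exp (u * (c + 1))) ((c+1) * Real.exp (0 * (c+1))) 0 := by
    simpa using (HasDerivAt.exp (hasDerivAt_id 0 |>.mul_const (c+1)))
  have := (h1.const_mul p).add (h2.const_mul (1 - p))
  convert this using 1
  · rfl
  · rfl
  · rfl
  simp; ring

lemma aux_eq (p c u : ℝ) :
    Real.exp (u * c) * (p * Real.exp (-u) + (1 - p) * Real.exp u)
      = p * Real.exp (u * (c - 1)) + (1 - p) * Real.exp (u * (c + 1)) := by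
  have e1 : u * (c - 1) = u * c + -u := by ring
  have e2 : u * (c + 1) = u * c + u := by ring
  rw [e1, e2, Real.exp_add, Real.exp_add]; ring


lemma exists_u_low (p c : ℝ) (hc : c < 2 * p - 1) :
    ∃ u : ℝ, 0 < u ∧
      Real.exp (u * c) * (p * Real.exp (-u) + (1 - p) * Real.exp u) < 1 := by
  set F := fun u : ℝ => p * Real.exp (u * (c - 1)) + (1 - p) * Real.exp (u * (c + 1)) with hF
  have hd := aux_deriv p c
  have hF0 : F 0 = 1 := by simp [hF]
  have hslope := hasDerivAt_iff_tendsto_slope.mp hd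
  have key : ∀ u : ℝ, 0 < u → slope F 0 u < 0 → F u < 1 := by
    intro u hu0 hs
    rw [slope_def_field] at hs
    rcases div_neg_iff.mp hs with ⟨h1, h2⟩ | ⟨h1, h2⟩
    · linarith
    · linarith
  have hneg : c - (2 * p - 1) < 0 := by linarith
  have h2 : ∀ᶠ u in 𝓝[≠] (0:ℝ), slope F 0 u < 0 := hslope.eventually_lt_const hneg
  have h3 : ∀ᶠ u in 𝓝[>] (0:ℝ), slope F 0 u < 0 :=
    h2.filter_mono (nhdsWithin_mono 0 (fun x hx => ne_of_gt hx))
  obtain ⟨u, hu, hs⟩ := (h3.and self_mem_nhdsWithin).exists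
  exact ⟨u, hs, by rw [aux_eq]; exact key u hs hu⟩

lemma exists_u_high (p c : ℝ) (hc : 2 * p - 1 < c) :
    ∃ u : ℝ, u < 0 ∧
      Real.exp (u * c) * (p * Real.exp (-u) + (1 - p) * Real.exp u) < 1 := by
  set F := fun u : ℝ => p * Real.exp (u * (c - 1)) + (1 - p) * Real.exp (u * (c + 1)) with hF
  have hd := aux_deriv p c
  have hF0 : F 0 = 1 := by simp [hF]
  have hslope := hasDerivAt_iff_tendsto_slope.mp hd
  have hpos : (0:ℝ) < c - (2 * p - 1) := by linarith
  have h2 : ∀ᶠ u in 𝓝[≠] (0:ℝ), 0 < slope F 0 u := hslope.eventually_const_lt hpos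
  have h3 : ∀ᶠ u in 𝓝[<] (0:ℝ), 0 < slope F 0 u :=
    h2.filter_mono (nhdsWithin_mono 0 (fun x hx => ne_of_lt hx))
  obtain ⟨u, hu, hs⟩ := (h3.and self_mem_nhdsWithin).exists
  refine ⟨u, hs, ?_⟩
  rw [aux_eq]
  show F u < 1
  rw [slope_def_field] at hu
  rcases div_pos_iff.mp hu with ⟨a, b⟩ | ⟨a, b⟩
  · linarith
  · linarith

section
variable {Ω : Type*} [MeasurableSpace Ω] {P : Measure Ω} [IsProbabilityMeasure P]
  {X : ℤ → ℕ → Ω → ℤ} {p : ℝ}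

lemma ae_pm (hm : IsFrogModel P X p) (hp0 : 0 ≤ p) (hp1 : p ≤ 1) (i : ℤ) (k : ℕ) :
    ∀ᵐ ω ∂P, X i k ω = 1 ∨ X i k ω = -1 := by
  have hmA : MeasurableSet {ω | X i k ω = 1} := hm.meas i k (measurableSet_singleton 1)
  have hmB : MeasurableSet {ω | X i k ω = -1} := hm.meas i k (measurableSet_singleton (-1))
  have hd : Disjoint {ω | X i k ω = 1} {ω | X i k ω = -1} := by
    rw [Set.disjoint_left]; intro ω h1 h2; simp only [Set.mem_setOf_eq] at h1 h2; omega
  have hu : P ({ω | X i k ω = 1} ∪ {ω | X i k ω = -1}) = 1 := by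
    rw [measure_union hd hmB, hm.prob_one i k, hm.prob_neg_one i k,
      ← ENNReal.ofReal_add hp0 (by linarith)]
    norm_num
  have : P ({ω | X i k ω = 1} ∪ {ω | X i k ω = -1})ᶜ = 0 := by
    rw [measure_compl (hmA.union hmB) (measure_ne_top _ _), hu, measure_univ]; simp
  filter_upwards [MeasureTheory.measure_eq_zero_iff_ae_notMem.mp this] with ω hω
  by_cases h : X i k ω = 1
  · exact Or.inl h
  · rcases (by simpa [Set.mem_union] using hω : ¬ X i k ω = 1 → X i k ω = -1) h with h2
    exact Or.inr h2

lemma row_indep (hm : IsFrogModel P X p) (i : ℤ) :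
    iIndepFun (fun k : ℕ => fun ω => ((X i k ω : ℤ) : ℝ)) P := by
  have base : iIndepFun (fun k : ℕ => X i k) P := by
    rw [iIndepFun_iff_measure_inter_preimage_eq_mul]
    intro S sets hsets
    have hinj : Set.InjOn (fun k : ℕ => ((i, k) : ℤ × ℕ)) S := fun a _ b _ h => by
      simpa using h
    have := (iIndepFun_iff_measure_inter_preimage_eq_mul.mp hm.indep)
      (S.image (fun k => ((i, k) : ℤ × ℕ))) (sets := fun j => sets j.2)
      (fun j hj => by
        obtain ⟨k, hk, rfl⟩ := Finset.mem_image.mp hj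
        exact hsets k hk)
    rw [Finset.set_biInter_finset_image, Finset.prod_image hinj] at this
    exact this
  exact base.comp (fun _ => (Int.cast : ℤ → ℝ)) (fun _ => measurable_of_countable _)

lemma mgf_single (hm : IsFrogModel P X p) (hp0 : 0 ≤ p) (hp1 : p ≤ 1) (i : ℤ) (k : ℕ) (t : ℝ) :
    Integrable (fun ω => Real.exp (t * ((X i k ω : ℤ) : ℝ))) P ∧
    ∫ ω, Real.exp (t * ((X i k ω : ℤ) : ℝ)) ∂P = p * Real.exp t + (1 - p) * Real.exp (-t) := by
  set A := {ω | X i k ω = 1} with hA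
  set B := {ω | X i k ω = -1} with hB
  have hmA : MeasurableSet A := hm.meas i k (measurableSet_singleton 1)
  have hmB : MeasurableSet B := hm.meas i k (measurableSet_singleton (-1))
  set g : Ω → ℝ := A.indicator (fun _ => Real.exp t) + B.indicator (fun _ => Real.exp (-t)) with hg
  have hae : (fun ω => Real.exp (t * ((X i k ω : ℤ) : ℝ))) =ᵐ[P] g := by
    filter_upwards [ae_pm hm hp0 hp1 i k] with ω hω
    rcases hω with h | h
    · have hωA : ω ∈ A := h
      have hωB : ω ∉ B := by simp only [hB, Set.mem_setOf_eq]; omega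
      simp [hg, Set.indicator_of_mem hωA, Set.indicator_of_notMem hωB, h]
    · have hωA : ω ∉ A := by simp only [hA, Set.mem_setOf_eq]; omega
      have hωB : ω ∈ B := h
      simp [hg, Set.indicator_of_mem hωB, Set.indicator_of_notMem hωA, h, mul_comm]
  have hint1 : Integrable (A.indicator (fun _ => Real.exp t)) P :=
    (integrable_const _).indicator hmA
  have hint2 : Integrable (B.indicator (fun _ => Real.exp (-t))) P :=
    (integrable_const _).indicator hmB
  have hgint : Integrable g P := hint1.add hint2
  refine ⟨hgint.congr hae.symm, ?_⟩
  rw [integral_congr_ae hae, hg, Pi.add_def, integral_add hint1 hint2,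
    integral_indicator_const _ hmA, integral_indicator_const _ hmB, measureReal_def, measureReal_def,
    hm.prob_one i k, hm.prob_neg_one i k,
    ENNReal.toReal_ofReal hp0, ENNReal.toReal_ofReal (by linarith)]
  simp only [smul_eq_mul]

end

section
variable {Ω : Type*} [MeasurableSpace Ω] {P : Measure Ω} [IsProbabilityMeasure P]
  {X : ℤ → ℕ → Ω → ℤ} {p : ℝ}

lemma frogS_meas (hm : IsFrogModel P X p) (i : ℤ) (n : ℕ) :
    Measurable (fun ω => ((frogS X ω i n : ℤ) : ℝ)) := by
  have : (fun ω => ((frogS X ω i n : ℤ) : ℝ))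
      = fun ω => ∑ k ∈ Finset.Icc 1 n, ((X i k ω : ℤ) : ℝ) := by
    funext ω; simp [frogS]
  rw [this]
  exact Finset.measurable_sum _ fun k _ =>
    (measurable_of_countable (Int.cast : ℤ → ℝ)).comp (hm.meas i k)

lemma mgf_S (hm : IsFrogModel P X p) (hp0 : 0 ≤ p) (hp1 : p ≤ 1) (i : ℤ) (n : ℕ) (t : ℝ) :
    Integrable (fun ω => Real.exp (t * ((frogS X ω i n : ℤ) : ℝ))) P ∧
    mgf (fun ω => ((frogS X ω i n : ℤ) : ℝ)) P t
      = (p * Real.exp t + (1 - p) * Real.exp (-t)) ^ n := by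
  set Y : ℕ → Ω → ℝ := fun k ω => ((X i k ω : ℤ) : ℝ) with hY
  have hmeas : ∀ k, Measurable (Y k) := fun k =>
    (measurable_of_countable (Int.cast : ℤ → ℝ)).comp (hm.meas i k)
  have hSn : (fun ω => ((frogS X ω i n : ℤ) : ℝ)) = ∑ k ∈ Finset.Icc 1 n, Y k := by
    funext ω; simp [frogS, Finset.sum_apply, hY]
  have hindep := row_indep hm i
  have hint : ∀ k ∈ Finset.Icc 1 n, Integrable (fun ω => Real.exp (t * Y k ω)) P :=
    fun k _ => (mgf_single hm hp0 hp1 i k t).1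
  constructor
  · have he : (fun ω => Real.exp (t * ((frogS X ω i n : ℤ) : ℝ)))
        = fun ω => Real.exp (t * (∑ k ∈ Finset.Icc 1 n, Y k) ω) := by
      funext ω; rw [congrFun hSn ω]
    rw [he]
    exact hindep.integrable_exp_mul_sum hmeas hint
  · rw [hSn, hindep.mgf_sum hmeas]
    have : ∀ k ∈ Finset.Icc 1 n, mgf (Y k) P t = p * Real.exp t + (1 - p) * Real.exp (-t) :=
      fun k _ => (mgf_single hm hp0 hp1 i k t).2
    rw [Finset.prod_congr rfl this, Finset.prod_const, Nat.card_Icc]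
    norm_num

lemma tail_low (hm : IsFrogModel P X p) (hp0 : 0 ≤ p) (hp1 : p ≤ 1) (i : ℤ) (n : ℕ)
    (c u : ℝ) (hu : 0 ≤ u) :
    P {ω | ((frogS X ω i n : ℤ) : ℝ) ≤ c * n}
      ≤ ENNReal.ofReal ((Real.exp (u * c) * (p * Real.exp (-u) + (1 - p) * Real.exp u)) ^ n) := by
  obtain ⟨hint, hmgf⟩ := mgf_S hm hp0 hp1 i n (-u)
  have hch := measure_le_le_exp_mul_mgf (μ := P)
    (X := fun ω => ((frogS X ω i n : ℤ) : ℝ)) (c * n) (neg_nonpos.mpr hu) hint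
  rw [hmgf] at hch
  have heq : Real.exp (u * (c * n)) = Real.exp (u * c) ^ n := by
    rw [← Real.exp_nat_mul]; ring_nf
  simp only [neg_neg] at hch
  rw [heq, ← mul_pow] at hch
  calc P {ω | ((frogS X ω i n : ℤ) : ℝ) ≤ c * n}
      = ENNReal.ofReal (P {ω | ((frogS X ω i n : ℤ) : ℝ) ≤ c * n}).toReal :=
        (ENNReal.ofReal_toReal (measure_ne_top _ _)).symm
    _ ≤ _ := ENNReal.ofReal_le_ofReal hch

lemma tail_high (hm : IsFrogModel P X p) (hp0 : 0 ≤ p) (hp1 : p ≤ 1) (i : ℤ) (n : ℕ)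
    (c u : ℝ) (hu : u ≤ 0) :
    P {ω | c * n ≤ ((frogS X ω i n : ℤ) : ℝ)}
      ≤ ENNReal.ofReal ((Real.exp (u * c) * (p * Real.exp (-u) + (1 - p) * Real.exp u)) ^ n) := by
  obtain ⟨hint, hmgf⟩ := mgf_S hm hp0 hp1 i n (-u)
  have hch := measure_ge_le_exp_mul_mgf (μ := P)
    (X := fun ω => ((frogS X ω i n : ℤ) : ℝ)) (c * n) (neg_nonneg.mpr hu) hint
  rw [hmgf] at hch
  have heq : Real.exp (u * (c * n)) = Real.exp (u * c) ^ n := by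
    rw [← Real.exp_nat_mul]; ring_nf
  simp only [neg_neg] at hch
  rw [heq, ← mul_pow] at hch
  calc P {ω | c * n ≤ ((frogS X ω i n : ℤ) : ℝ)}
      = ENNReal.ofReal (P {ω | c * n ≤ ((frogS X ω i n : ℤ) : ℝ)}).toReal :=
        (ENNReal.ofReal_toReal (measure_ne_top _ _)).symm
    _ ≤ _ := ENNReal.ofReal_le_ofReal hch

end

section
variable {Ω : Type*} [MeasurableSpace Ω] {P : Measure Ω} [IsProbabilityMeasure P]
  {X : ℤ → ℕ → Ω → ℤ} {p : ℝ}

lemma summable_aux {r : ℝ} (h0 : 0 ≤ r) (h1 : r < 1) :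
    Summable (fun n : ℕ => (2 * (n : ℝ) + 1) * r ^ n) := by
  have hr : ‖r‖ < 1 := by rw [Real.norm_eq_abs, abs_of_nonneg h0]; exact h1
  have h2 : Summable (fun n : ℕ => (n : ℝ) ^ 1 * r ^ n) :=
    summable_pow_mul_geometric_of_norm_lt_one 1 hr
  have h3 : Summable (fun n : ℕ => r ^ n) := summable_geometric_of_norm_lt_one hr
  have := (h2.mul_left 2).add h3
  refine this.congr fun n => by ring

lemma tsum_ne_top_aux {f : ℕ → ℝ} (h0 : ∀ n, 0 ≤ f n) (hs : Summable f)
    {s : ℕ → Set Ω} (hle : ∀ n, P (s n) ≤ ENNReal.ofReal (f n)) :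
    (∑' n, P (s n)) ≠ ∞ := by
  have : (∑' n, P (s n)) ≤ ∑' n, ENNReal.ofReal (f n) := ENNReal.tsum_le_tsum hle
  rw [← ENNReal.ofReal_tsum_of_nonneg h0 hs] at this
  exact ne_top_of_le_ne_top ENNReal.ofReal_ne_top this

lemma ev_low (hm : IsFrogModel P X p) (hp0 : 0 ≤ p) (hp1 : p ≤ 1) (c u : ℝ) (hu : 0 < u)
    (hr : Real.exp (u * c) * (p * Real.exp (-u) + (1 - p) * Real.exp u) < 1) :
    ∀ᵐ ω ∂P, ∀ᶠ n : ℕ in atTop, ∀ i ∈ Finset.Icc (-(n : ℤ)) (n : ℤ),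
      c * n < ((frogS X ω i n : ℤ) : ℝ) := by
  set r := Real.exp (u * c) * (p * Real.exp (-u) + (1 - p) * Real.exp u) with hrdef
  have hr0 : 0 ≤ r := by
    apply mul_nonneg (Real.exp_pos _).le
    have := Real.exp_pos (-u); have := Real.exp_pos u
    nlinarith
  set s : ℕ → Set Ω := fun n =>
    ⋃ i ∈ Finset.Icc (-(n : ℤ)) (n : ℤ), {ω | ((frogS X ω i n : ℤ) : ℝ) ≤ c * n} with hs
  have hbound : ∀ n, P (s n) ≤ ENNReal.ofReal ((2 * (n : ℝ) + 1) * r ^ n) := by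
    intro n
    calc P (s n) ≤ ∑ i ∈ Finset.Icc (-(n : ℤ)) (n : ℤ),
        P {ω | ((frogS X ω i n : ℤ) : ℝ) ≤ c * n} := measure_biUnion_finset_le _ _
      _ ≤ ∑ i ∈ Finset.Icc (-(n : ℤ)) (n : ℤ), ENNReal.ofReal (r ^ n) :=
          Finset.sum_le_sum fun i _ => tail_low hm hp0 hp1 i n c u hu.le
      _ = (Finset.Icc (-(n : ℤ)) (n : ℤ)).card • ENNReal.ofReal (r ^ n) :=
          (Finset.sum_const _)
      _ = ENNReal.ofReal ((2 * (n : ℝ) + 1) * r ^ n) := by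
          rw [Int.card_Icc]
          have hcard : (↑(n : ℤ) + 1 - -(n : ℤ)).toNat = 2 * n + 1 := by omega
          rw [hcard, nsmul_eq_mul,
            ← ENNReal.ofReal_natCast (2 * n + 1),
            ← ENNReal.ofReal_mul (by positivity)]
          congr 1
          push_cast
          ring
  have hne := tsum_ne_top_aux (fun n => by positivity) (summable_aux hr0 hr) hbound
  filter_upwards [ae_eventually_notMem hne] with ω hω
  filter_upwards [hω] with n hn i hi
  by_contra hcon
  push_neg at hcon
  exact hn (Set.mem_biUnion hi hcon)

lemma ev_high (hm : IsFrogModel P X p) (hp0 : 0 ≤ p) (hp1 : p ≤ 1) (c u : ℝ) (hu : u < 0)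
    (hr : Real.exp (u * c) * (p * Real.exp (-u) + (1 - p) * Real.exp u) < 1) :
    ∀ᵐ ω ∂P, ∀ᶠ n : ℕ in atTop, ((frogS X ω 0 n : ℤ) : ℝ) < c * n := by
  set r := Real.exp (u * c) * (p * Real.exp (-u) + (1 - p) * Real.exp u) with hrdef
  have hr0 : 0 ≤ r := by
    apply mul_nonneg (Real.exp_pos _).le
    have := Real.exp_pos (-u); have := Real.exp_pos u
    nlinarith
  set s : ℕ → Set Ω := fun n => {ω | c * n ≤ ((frogS X ω 0 n : ℤ) : ℝ)} with hs
  have hbound : ∀ n, P (s n) ≤ ENNReal.ofReal (r ^ n) := fun n =>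
    tail_high hm hp0 hp1 0 n c u hu.le
  have hsum : Summable (fun n : ℕ => r ^ n) := summable_geometric_of_norm_lt_one
    (by rw [Real.norm_eq_abs, abs_of_nonneg hr0]; exact hr)
  have hne := tsum_ne_top_aux (fun n => by positivity) hsum hbound
  filter_upwards [ae_eventually_notMem hne] with ω hω
  filter_upwards [hω] with n hn
  by_contra hcon
  push_neg at hcon
  exact hn hcon

end

/-- **Lemma 2 (minimum of independent random walks).**
If `(X_k^i)` is an i.i.d. family with `P(X = 1) = p = 1 - P(X = -1)`, `1/2 ≤ p ≤ 1`, and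
`S_n^i = ∑_{k=1}^n X_k^i`, then almost surely
`(1/n) · min_{i ∈ {-n, …, n}} S_n^i → 2p - 1`. -/
theorem min_of_independent_walks
    {Ω : Type*} [MeasurableSpace Ω] (P : Measure Ω) [IsProbabilityMeasure P]
    (X : ℤ → ℕ → Ω → ℤ) (p : ℝ) (hmodel : IsFrogModel P X p)
    (hp : 1 / 2 ≤ p) (hp1 : p ≤ 1) :
    ∀ᵐ ω ∂P, Tendsto (fun n : ℕ =>
        (((Finset.Icc (-(n : ℤ)) n).inf' (Finset.nonempty_Icc.mpr (by omega))
            (fun i => frogS X ω i n) : ℤ) : ℝ) / n)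
      atTop (𝓝 (2 * p - 1)) := by
  have hp0 : 0 ≤ p := by linarith
  have key : ∀ᵐ ω ∂P, ∀ m : ℕ,
      (∀ᶠ n : ℕ in atTop, ∀ i ∈ Finset.Icc (-(n : ℤ)) (n : ℤ),
        (2 * p - 1 - 1 / (m + 1)) * n < ((frogS X ω i n : ℤ) : ℝ)) ∧
      (∀ᶠ n : ℕ in atTop, ((frogS X ω 0 n : ℤ) : ℝ) < (2 * p - 1 + 1 / (m + 1)) * n) := by
    rw [ae_all_iff]
    intro m
    have hm1 : (0:ℝ) < 1 / (m + 1) := by positivity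
    obtain ⟨u, hu, hru⟩ := exists_u_low p (2 * p - 1 - 1 / (m + 1)) (by linarith)
    obtain ⟨v, hv, hrv⟩ := exists_u_high p (2 * p - 1 + 1 / (m + 1)) (by linarith)
    exact (ev_low hmodel hp0 hp1 _ u hu hru).and (ev_high hmodel hp0 hp1 _ v hv hrv)
  filter_upwards [key] with ω hω
  rw [Metric.tendsto_atTop]
  intro ε hε
  obtain ⟨m, hm⟩ := exists_nat_one_div_lt hε
  obtain ⟨hlow, hhigh⟩ := hω m
  obtain ⟨N, hN⟩ := eventually_atTop.mp (hlow.and (hhigh.and (eventually_ge_atTop 1)))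
  refine ⟨N, fun n hn => ?_⟩
  obtain ⟨h1, h2, h3⟩ := hN n hn
  have hn0 : (0:ℝ) < n := by exact_mod_cast Nat.lt_of_lt_of_le Nat.zero_lt_one h3
  have hne : (Finset.Icc (-(n : ℤ)) (n : ℤ)).Nonempty := Finset.nonempty_Icc.mpr (by omega)
  have h0F : (0:ℤ) ∈ Finset.Icc (-(n : ℤ)) (n : ℤ) := by
    simp only [Finset.mem_Icc]; omega
  have hcast : (((Finset.Icc (-(n : ℤ)) (n : ℤ)).inf' hne (fun i => frogS X ω i n) : ℤ) : ℝ)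
      = (Finset.Icc (-(n : ℤ)) (n : ℤ)).inf' hne (fun i => ((frogS X ω i n : ℤ) : ℝ)) := by
    rw [Finset.apply_inf'_eq_inf'_comp hne (fun z : ℤ => (z : ℝ))
      (fun x y => by push_cast; rfl)]
    rfl
  have hMlt : (Finset.Icc (-(n : ℤ)) (n : ℤ)).inf' hne (fun i => ((frogS X ω i n : ℤ) : ℝ))
      < (2 * p - 1 + 1 / (m + 1)) * n :=
    lt_of_le_of_lt (Finset.inf'_le _ h0F) h2
  have hMgt : (2 * p - 1 - 1 / (m + 1)) * n
      < (Finset.Icc (-(n : ℤ)) (n : ℤ)).inf' hne (fun i => ((frogS X ω i n : ℤ) : ℝ)) :=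
    (Finset.lt_inf'_iff hne).mpr h1
  rw [Real.dist_eq, abs_lt]
  have e1 : 2 * p - 1 - 1 / (m + 1)
      < (((Finset.Icc (-(n : ℤ)) (n : ℤ)).inf' hne (fun i => frogS X ω i n) : ℤ) : ℝ) / n := by
    rw [hcast, lt_div_iff₀ hn0]; exact hMgt
  have e2 : (((Finset.Icc (-(n : ℤ)) (n : ℤ)).inf' hne (fun i => frogS X ω i n) : ℤ) : ℝ) / n
      < 2 * p - 1 + 1 / (m + 1) := by
    rw [hcast, div_lt_iff₀ hn0]; exact hMlt
  constructor
  · linarith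
  · linarith
end

section
/- For every drift parameter p with 1/2 < p < 1, the expected activation time of the frog at site 1 in the frog model is strictly smaller than the expected hitting time of the point 1 by a single p-drift random walk: E[T_1] < 1/(2p − 1). -/
open MeasureTheory ProbabilityTheory Filter
open scoped ENNReal NNReal Topology

set_option linter.unusedSectionVars false

lemma hitTime_le {S : ℤ → ℕ → ℤ} {j i : ℤ} {n : ℕ} (h : j + S j n = i) :
    hitTime S j i ≤ (n : ℕ∞) :=
  sInf_le ⟨n, rfl, h⟩

lemma le_hitTime_iff {S : ℤ → ℕ → ℤ} {j i : ℤ} {k : ℕ} :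
    (k : ℕ∞) ≤ hitTime S j i ↔ ∀ m < k, j + S j m ≠ i := by
  constructor
  · intro h m hm heq
    have h2 : hitTime S j i ≤ (m : ℕ∞) := sInf_le ⟨m, rfl, heq⟩
    have := h.trans h2
    exact absurd (Nat.cast_le.mp this) (not_le.mpr hm)
  · intro h
    refine le_sInf ?_
    rintro t ⟨n, rfl, hn⟩
    refine Nat.cast_le.mpr ?_
    by_contra hc
    exact h n (not_le.mp hc) hn

/-- frogT is bounded by the direct hitting time (chain of length one). -/
lemma frogT_le_hitTime (S : ℤ → ℕ → ℤ) : frogT S 1 ≤ hitTime S 0 1 := by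
  refine sInf_le ⟨1, fun l => (l : ℤ), by simp, by simp, ?_⟩
  simp

/-- frogT through -1. -/
lemma frogT_le_chain (S : ℤ → ℕ → ℤ) :
    frogT S 1 ≤ hitTime S 0 (-1) + hitTime S (-1) 1 := by
  refine sInf_le ⟨2, fun l => if l = 0 then 0 else if l = 1 then -1 else 1, rfl, rfl, ?_⟩
  rw [Finset.sum_range_succ, Finset.sum_range_one]
  norm_num

/-- If all steps are ±1 and the walk never equals `1` before time `m`, then `S_m ≤ 1`. -/
lemma walk_le_one {f : ℕ → ℤ} (m : ℕ) (hf : ∀ k ∈ Finset.Icc 1 m, f k = 1 ∨ f k = -1)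
    (h : ∀ j < m, ∑ k ∈ Finset.Icc 1 j, f k ≠ 1) :
    ∑ k ∈ Finset.Icc 1 m, f k ≤ 1 := by
  induction m with
  | zero => simp
  | succ n ih =>
    have hsum : ∑ k ∈ Finset.Icc 1 (n + 1), f k = (∑ k ∈ Finset.Icc 1 n, f k) + f (n + 1) :=
      Finset.sum_Icc_succ_top (Nat.one_le_iff_ne_zero.mpr (Nat.succ_ne_zero n)) f
    have h1 : ∑ k ∈ Finset.Icc 1 n, f k ≤ 1 := by
      refine ih (fun k hk => hf k ?_) (fun j hj => h j (hj.trans (Nat.lt_succ_self n)))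
      simp only [Finset.mem_Icc] at hk ⊢; omega
    have h2 : ∑ k ∈ Finset.Icc 1 n, f k ≠ 1 := h n (Nat.lt_succ_self n)
    have h3 : f (n + 1) = 1 ∨ f (n + 1) = -1 := hf (n + 1) (by simp)
    rw [hsum]
    rcases h3 with h3 | h3 <;> omega

/-- Counting identity: sum of ±1 values equals #(+1) - #(-1). -/
lemma sum_eq_card_sub_card {f : ℕ → ℤ} (m : ℕ)
    (hf : ∀ k ∈ Finset.Icc 1 m, f k = 1 ∨ f k = -1) :
    ∑ k ∈ Finset.Icc 1 m, f k =
      (((Finset.Icc 1 m).filter fun k : ℕ => f k = 1).card : ℤ)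
        - (((Finset.Icc 1 m).filter fun k : ℕ => f k = -1).card : ℤ) := by
  classical
  rw [← Finset.sum_filter_add_sum_filter_not (Finset.Icc 1 m) (fun k => f k = 1)]
  have h1 : ∑ k ∈ (Finset.Icc 1 m).filter (fun k => f k = 1), f k
      = (((Finset.Icc 1 m).filter fun k : ℕ => f k = 1).card : ℤ) := by
    rw [Finset.sum_congr rfl (fun k hk => (Finset.mem_filter.mp hk).2)]
    simp
  have hset : (Finset.Icc 1 m).filter (fun k => ¬ f k = 1)
      = (Finset.Icc 1 m).filter (fun k => f k = -1) := by
    refine Finset.filter_congr (fun k hk => ?_)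
    rcases hf k hk with h | h <;> simp [h]
  have h2 : ∑ k ∈ (Finset.Icc 1 m).filter (fun k => ¬ f k = 1), f k
      = -(((Finset.Icc 1 m).filter fun k : ℕ => f k = -1).card : ℤ) := by
    rw [hset, Finset.sum_congr rfl (fun k hk => (Finset.mem_filter.mp hk).2)]
    simp
  rw [h1, h2]; ring

/-- casting tsum identity -/
lemma enat_toENNReal_eq_tsum (t : ℕ∞) :
    (t : ℝ≥0∞) = ∑' k : ℕ, (if ((k : ℕ∞) + 1 ≤ t) then (1 : ℝ≥0∞) else 0) := by
  cases t with
  | top =>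
    simp only [le_top, if_true]
    rw [ENat.toENNReal_top, ENNReal.tsum_const_eq_top_of_ne_zero one_ne_zero]
  | coe m =>
    rw [tsum_eq_sum (s := Finset.range m) (by
      intro k hk
      simp only [Finset.mem_range, not_lt] at hk
      rw [if_neg]
      rw [← Nat.cast_one, ← Nat.cast_add, Nat.cast_le]
      omega)]
    have : ∀ k ∈ Finset.range m, (if ((k : ℕ∞) + 1 ≤ (m : ℕ∞)) then (1 : ℝ≥0∞) else 0) = 1 := by
      intro k hk
      simp only [Finset.mem_range] at hk
      rw [if_pos]
      rw [← Nat.cast_one, ← Nat.cast_add, Nat.cast_le]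
      omega
    rw [Finset.sum_congr rfl this]
    simp

/-- Pathwise counting bound: among the first `n` steps taken before (or at) the hitting
time of `1`, the number of `+1` steps exceeds the number of `-1` steps by at most one. -/
lemma count_bound {S : ℤ → ℕ → ℤ} {f : ℕ → ℤ} (n : ℕ)
    (hS : ∀ m, S 0 m = ∑ k ∈ Finset.Icc 1 m, f k)
    (hf : ∀ k ∈ Finset.Icc 1 n, f k = 1 ∨ f k = -1) :
    ((Finset.Icc 1 n).filter fun k : ℕ => (((k : ℕ) : ℕ∞) ≤ hitTime S 0 1 ∧ f k = 1)).card
      ≤ ((Finset.Icc 1 n).filter fun k : ℕ => (((k : ℕ) : ℕ∞) ≤ hitTime S 0 1 ∧ f k = -1)).card + 1 := by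
  classical
  by_cases hn : (n : ℕ∞) ≤ hitTime S 0 1
  · -- all k ∈ [1,n] satisfy the hitting-time condition
    have hcond : ∀ k ∈ Finset.Icc 1 n, (k : ℕ∞) ≤ hitTime S 0 1 := by
      intro k hk
      refine le_trans ?_ hn
      exact_mod_cast Nat.cast_le.mpr (Finset.mem_Icc.mp hk).2
    have e1 : ((Finset.Icc 1 n).filter fun k : ℕ => (((k : ℕ) : ℕ∞) ≤ hitTime S 0 1 ∧ f k = 1))
        = (Finset.Icc 1 n).filter fun k : ℕ => f k = 1 :=
      Finset.filter_congr fun k hk => by simp [hcond k hk]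
    have e2 : ((Finset.Icc 1 n).filter fun k : ℕ => (((k : ℕ) : ℕ∞) ≤ hitTime S 0 1 ∧ f k = -1))
        = (Finset.Icc 1 n).filter fun k : ℕ => f k = -1 :=
      Finset.filter_congr fun k hk => by simp [hcond k hk]
    have hne : ∀ j < n, ∑ k ∈ Finset.Icc 1 j, f k ≠ 1 := by
      intro j hj hsum
      have := le_hitTime_iff.mp hn j hj
      rw [hS j, hsum] at this
      exact this (by ring)
    have hle := walk_le_one n hf hne
    have hkey := sum_eq_card_sub_card n hf
    rw [e1, e2]
    omega
  · -- the walk hits 1 at some time m₀ < n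
    have hex' : ∃ m, ∑ k ∈ Finset.Icc 1 m, f k = 1 := by
      by_contra hc
      push_neg at hc
      exact hn (le_hitTime_iff.mpr fun m _ heq => hc m (by rw [hS] at heq; omega))
    set m₀ := Nat.find hex' with hm₀
    have hspec : ∑ k ∈ Finset.Icc 1 m₀, f k = 1 := Nat.find_spec hex'
    have hm₀n : m₀ < n := by
      by_contra hc
      push_neg at hc
      refine hn (le_hitTime_iff.mpr fun m hm heq => ?_)
      rw [hS] at heq
      have : m₀ ≤ m := Nat.find_min' hex' (by omega)
      omega
    have hT : hitTime S 0 1 = (m₀ : ℕ∞) := by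
      refine le_antisymm (hitTime_le (by rw [hS]; omega)) ?_
      refine le_hitTime_iff.mpr fun m hm heq => ?_
      rw [hS] at heq
      exact Nat.find_min hex' hm (by omega)
    have hcondeq : ∀ k : ℕ, (((k : ℕ) : ℕ∞) ≤ hitTime S 0 1) ↔ k ≤ m₀ := by
      intro k; rw [hT, Nat.cast_le]
    have e1 : ∀ c : ℤ, ((Finset.Icc 1 n).filter fun k : ℕ => (((k : ℕ) : ℕ∞) ≤ hitTime S 0 1 ∧ f k = c))
        = (Finset.Icc 1 m₀).filter fun k : ℕ => f k = c := by
      intro c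
      ext k
      simp only [Finset.mem_filter, Finset.mem_Icc, hcondeq]
      constructor
      · rintro ⟨⟨h1, _⟩, h2, h3⟩; exact ⟨⟨h1, h2⟩, h3⟩
      · rintro ⟨⟨h1, h2⟩, h3⟩; exact ⟨⟨h1, by omega⟩, h2, h3⟩
    have hfm : ∀ k ∈ Finset.Icc 1 m₀, f k = 1 ∨ f k = -1 := by
      intro k hk
      refine hf k ?_
      simp only [Finset.mem_Icc] at hk ⊢; omega
    have hkey := sum_eq_card_sub_card m₀ hfm
    rw [e1, e1]
    omega

section prob

variable {Ω : Type*} [MeasurableSpace Ω] {P : Measure Ω} [IsProbabilityMeasure P]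
  {X : ℤ → ℕ → Ω → ℤ} {p : ℝ}

lemma meas_frogS (hX : ∀ i k, Measurable (X i k)) (i : ℤ) (n : ℕ) :
    Measurable fun ω => frogS X ω i n :=
  Finset.measurable_sum _ fun k _ => hX i k

/-- The event that the 0-walk has not yet hit `1` strictly before time `k`. -/
def Aset (X : ℤ → ℕ → Ω → ℤ) (k : ℕ) : Set Ω :=
  {ω | (k : ℕ∞) ≤ hitTime (frogS X ω) 0 1}

lemma Aset_eq (k : ℕ) : Aset X k
    = ⋂ (m : ℕ) (_ : m < k), (fun ω => (0 : ℤ) + frogS X ω 0 m) ⁻¹' {1}ᶜ := by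
  ext ω
  simp only [Aset, Set.mem_setOf_eq, le_hitTime_iff, Set.mem_iInter, Set.mem_preimage,
    Set.mem_compl_iff, Set.mem_singleton_iff]

lemma meas_Aset (hX : ∀ i k, Measurable (X i k)) (k : ℕ) : MeasurableSet (Aset X k) := by
  rw [Aset_eq]
  exact MeasurableSet.iInter fun m => MeasurableSet.iInter fun _ =>
    (measurable_const.add (meas_frogS hX 0 m)) (measurableSet_singleton 1).compl

/-- Independence of `Aset X k` (which depends only on `X 0 1, …, X 0 (k-1)`) from `X 0 k`. -/
lemma indep_Aset (hX : ∀ i k, Measurable (X i k))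
    (hind : iIndepFun (fun ik : ℤ × ℕ => X ik.1 ik.2) P)
    (k : ℕ) (B : Set ℤ) (hB : MeasurableSet B) :
    P (Aset X k ∩ X 0 k ⁻¹' B) = P (Aset X k) * P (X 0 k ⁻¹' B) := by
  classical
  set Sfin : Finset (ℤ × ℕ) := (Finset.Icc 1 (k - 1)).image (fun j => ((0 : ℤ), j)) with hSfin
  set Tfin : Finset (ℤ × ℕ) := {((0 : ℤ), k)} with hTfin
  have hdisj : Disjoint Sfin Tfin := by
    rw [Finset.disjoint_right]
    intro a ha
    rw [hTfin, Finset.mem_singleton] at ha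
    subst ha
    rw [hSfin, Finset.mem_image]
    rintro ⟨j, hj, hj2⟩
    rw [Finset.mem_Icc] at hj
    have : j = k := congrArg Prod.snd hj2
    omega
  have hIF := hind.indepFun_finset Sfin Tfin hdisj (fun ik => hX ik.1 ik.2)
  set φ : ((i : Sfin) → ℤ) → (ℕ → ℤ) :=
    fun v j => if h : ((0 : ℤ), j) ∈ Sfin then v ⟨((0 : ℤ), j), h⟩ else 0 with hφdef
  set ψ : ((i : Tfin) → ℤ) → ℤ :=
    fun w => w ⟨((0 : ℤ), k), Finset.mem_singleton_self _⟩ with hψdef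
  have hφ : Measurable φ := by
    refine measurable_pi_lambda _ fun j => ?_
    by_cases h : ((0 : ℤ), j) ∈ Sfin
    · simp only [hφdef, dif_pos h]
      exact measurable_pi_apply _
    · simp only [hφdef, dif_neg h]
      exact measurable_const
  have hψ : Measurable ψ := measurable_pi_apply _
  have hIF2 := hIF.comp hφ hψ
  set W : Ω → ℕ → ℤ := fun ω => φ (fun i : Sfin => X (i : ℤ × ℕ).1 (i : ℤ × ℕ).2 ω) with hWdef
  have hψcomp : (ψ ∘ fun a (i : Tfin) => X (i : ℤ × ℕ).1 (i : ℤ × ℕ).2 a) = X 0 k := rfl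
  rw [hψcomp] at hIF2
  set C : Set (ℕ → ℤ) := {u | ∀ m < k, (0 : ℤ) + ∑ j ∈ Finset.Icc 1 m, u j ≠ 1} with hCdef
  have hC : MeasurableSet C := by
    have : C = ⋂ (m : ℕ) (_ : m < k),
        (fun u : ℕ → ℤ => (0 : ℤ) + ∑ j ∈ Finset.Icc 1 m, u j) ⁻¹' {1}ᶜ := by
      ext u
      simp only [hCdef, Set.mem_setOf_eq, Set.mem_iInter, Set.mem_preimage, Set.mem_compl_iff,
        Set.mem_singleton_iff]
    rw [this]
    exact MeasurableSet.iInter fun m => MeasurableSet.iInter fun _ =>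
      (measurable_const.add (Finset.measurable_sum _ fun j _ => measurable_pi_apply j))
        (measurableSet_singleton 1).compl
  have hAeq : Aset X k = W ⁻¹' C := by
    ext ω
    simp only [Aset, Set.mem_setOf_eq, le_hitTime_iff, Set.mem_preimage, hCdef]
    refine forall₂_congr fun m hm => ?_
    have hsum : frogS X ω 0 m = ∑ j ∈ Finset.Icc 1 m, W ω j := by
      refine Finset.sum_congr rfl fun j hj => ?_
      rw [Finset.mem_Icc] at hj
      have hmem : ((0 : ℤ), j) ∈ Sfin := by
        rw [hSfin, Finset.mem_image]
        exact ⟨j, Finset.mem_Icc.mpr ⟨hj.1, by omega⟩, rfl⟩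
      simp only [hWdef, hφdef, dif_pos hmem]
    rw [hsum]
  rw [hAeq]
  exact hIF2.measure_inter_preimage_eq_mul C B hC hB

end prob

section prob2

variable {Ω : Type*} [MeasurableSpace Ω] {P : Measure Ω} [IsProbabilityMeasure P]
  {X : ℤ → ℕ → Ω → ℤ} {p : ℝ}

lemma union_pm_ae (hX : ∀ i k, Measurable (X i k))
    (h1 : ∀ i k, P {ω | X i k ω = 1} = ENNReal.ofReal p)
    (h2 : ∀ i k, P {ω | X i k ω = -1} = ENNReal.ofReal (1 - p))
    (hp0 : 0 ≤ p) (hp1 : p ≤ 1) :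
    ∀ᵐ ω ∂P, ∀ i k, X i k ω = 1 ∨ X i k ω = -1 := by
  have hm1 : ∀ i k, MeasurableSet {ω | X i k ω = 1} :=
    fun i k => hX i k (measurableSet_singleton 1)
  have hm2 : ∀ i k, MeasurableSet {ω | X i k ω = -1} :=
    fun i k => hX i k (measurableSet_singleton (-1))
  have hdisj : ∀ i k, Disjoint {ω | X i k ω = 1} {ω | X i k ω = -1} := by
    intro i k
    rw [Set.disjoint_left]
    rintro ω h1' h2'
    simp only [Set.mem_setOf_eq] at h1' h2'
    omega
  have hone : ∀ i k, P ({ω | X i k ω = 1} ∪ {ω | X i k ω = -1}) = 1 := by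
    intro i k
    rw [measure_union (hdisj i k) (hm2 i k), h1, h2, ← ENNReal.ofReal_add hp0 (by linarith)]
    norm_num
  have hnull : ∀ i k, P ({ω | X i k ω = 1} ∪ {ω | X i k ω = -1})ᶜ = 0 := by
    intro i k
    rw [measure_compl ((hm1 i k).union (hm2 i k)) (measure_ne_top P _), hone, measure_univ,
      tsub_self]
  have : ∀ᵐ ω ∂P, ∀ ik : ℤ × ℕ, X ik.1 ik.2 ω = 1 ∨ X ik.1 ik.2 ω = -1 := by
    rw [ae_all_iff]
    intro ik
    rw [ae_iff]
    have hset : {a | ¬(X ik.1 ik.2 a = 1 ∨ X ik.1 ik.2 a = -1)}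
        = ({ω | X ik.1 ik.2 ω = 1} ∪ {ω | X ik.1 ik.2 ω = -1})ᶜ := by
      ext ω
      simp [not_or]
    rw [hset]
    exact hnull ik.1 ik.2
  filter_upwards [this] with ω hω i k using hω (i, k)

/-- Key truncated-Wald bound: `(2p-1) ∑_{k=1}^n P(A_k) ≤ 1`. -/
lemma key_sum_bound (hX : ∀ i k, Measurable (X i k))
    (hind : iIndepFun (fun ik : ℤ × ℕ => X ik.1 ik.2) P)
    (h1 : ∀ i k, P {ω | X i k ω = 1} = ENNReal.ofReal p)
    (h2 : ∀ i k, P {ω | X i k ω = -1} = ENNReal.ofReal (1 - p))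
    (hp : 1 / 2 < p) (hp1 : p < 1) (n : ℕ) :
    ENNReal.ofReal (2 * p - 1) * ∑ k ∈ Finset.Icc 1 n, P (Aset X k) ≤ 1 := by
  classical
  set D : ℤ → ℕ → Set Ω := fun c k => Aset X k ∩ X 0 k ⁻¹' {c} with hDdef
  have hmeasD : ∀ c k, MeasurableSet (D c k) := fun c k =>
    (meas_Aset hX k).inter (hX 0 k (measurableSet_singleton c))
  -- step 1: ∑ P(D 1 k) ≤ 1 + ∑ P(D (-1) k)
  have hsum_le : ∑ k ∈ Finset.Icc 1 n, P (D 1 k) ≤ 1 + ∑ k ∈ Finset.Icc 1 n, P (D (-1) k) := by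
    have l1 : ∀ c : ℤ, ∑ k ∈ Finset.Icc 1 n, P (D c k)
        = ∫⁻ ω, ∑ k ∈ Finset.Icc 1 n, (D c k).indicator 1 ω ∂P := by
      intro c
      rw [lintegral_finset_sum _ (fun k _ => measurable_one.indicator (hmeasD c k))]
      exact Finset.sum_congr rfl fun k _ => (lintegral_indicator_one (hmeasD c k)).symm
    rw [l1 1, l1 (-1)]
    have lr : (1 : ℝ≥0∞) + ∫⁻ ω, ∑ k ∈ Finset.Icc 1 n, (D (-1) k).indicator 1 ω ∂P
        = ∫⁻ ω, (1 + ∑ k ∈ Finset.Icc 1 n, (D (-1) k).indicator 1 ω) ∂P := by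
      rw [lintegral_add_left measurable_const]
      simp
    rw [lr]
    refine lintegral_mono_ae ?_
    filter_upwards [union_pm_ae hX h1 h2 (by linarith) (by linarith)] with ω hω
    -- convert indicator sums to filter cards
    have hcard : ∀ c : ℤ, ∑ k ∈ Finset.Icc 1 n, (D c k).indicator 1 ω
        = (((Finset.Icc 1 n).filter fun k : ℕ =>
            (((k : ℕ) : ℕ∞) ≤ hitTime (frogS X ω) 0 1 ∧ X 0 k ω = c)).card : ℝ≥0∞) := by
      intro c
      rw [Finset.card_filter, Nat.cast_sum]
      refine Finset.sum_congr rfl fun k _ => ?_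
      rw [Set.indicator_apply]
      by_cases hmem : ω ∈ D c k
      · have hcond : ((k : ℕ) : ℕ∞) ≤ hitTime (frogS X ω) 0 1 ∧ X 0 k ω = c := hmem
        simp [hmem, hcond]
      · have hcond : ¬(((k : ℕ) : ℕ∞) ≤ hitTime (frogS X ω) 0 1 ∧ X 0 k ω = c) := hmem
        simp [hmem, hcond]
    rw [hcard 1, hcard (-1)]
    have hcb := count_bound (S := frogS X ω) (f := fun k => X 0 k ω) n
      (fun m => rfl) (fun k _ => hω 0 k)
    calc (_ : ℝ≥0∞) ≤ ((((Finset.Icc 1 n).filter fun k : ℕ =>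
            (((k : ℕ) : ℕ∞) ≤ hitTime (frogS X ω) 0 1 ∧ X 0 k ω = -1)).card + 1 : ℕ) : ℝ≥0∞) :=
          Nat.cast_le.mpr hcb
      _ = _ := by push_cast; ring
  -- step 2: substitute independence
  have hD1 : ∀ k, P (D 1 k) = P (Aset X k) * ENNReal.ofReal p := by
    intro k
    rw [hDdef]
    simp only
    rw [indep_Aset hX hind k {1} (measurableSet_singleton 1)]
    congr 1
    exact h1 0 k
  have hDm : ∀ k, P (D (-1) k) = P (Aset X k) * ENNReal.ofReal (1 - p) := by
    intro k
    rw [hDdef]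
    simp only
    rw [indep_Aset hX hind k {-1} (measurableSet_singleton (-1))]
    congr 1
    exact h2 0 k
  rw [Finset.sum_congr rfl fun k _ => hD1 k, Finset.sum_congr rfl fun k _ => hDm k,
    ← Finset.sum_mul, ← Finset.sum_mul] at hsum_le
  set Sg : ℝ≥0∞ := ∑ k ∈ Finset.Icc 1 n, P (Aset X k) with hSg
  have hSgne : Sg ≠ ⊤ := by
    refine ne_top_of_le_ne_top (b := (n : ℝ≥0∞)) (by simp) ?_
    calc Sg ≤ ∑ k ∈ Finset.Icc 1 n, 1 := Finset.sum_le_sum fun k _ => prob_le_one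
      _ ≤ (n : ℝ≥0∞) := by simp
  have hsplit : ENNReal.ofReal p = ENNReal.ofReal (2 * p - 1) + ENNReal.ofReal (1 - p) := by
    rw [← ENNReal.ofReal_add (by linarith) (by linarith)]
    ring_nf
  rw [hsplit, mul_add] at hsum_le
  -- cancel the common term
  have hne : Sg * ENNReal.ofReal (1 - p) ≠ ⊤ :=
    ENNReal.mul_ne_top hSgne ENNReal.ofReal_ne_top
  rw [mul_comm (ENNReal.ofReal (2 * p - 1)) Sg]
  exact (ENNReal.add_le_add_iff_right hne).mp hsum_le

end prob2

section prob3

variable {Ω : Type*} [MeasurableSpace Ω] {P : Measure Ω} [IsProbabilityMeasure P]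
  {X : ℤ → ℕ → Ω → ℤ} {p : ℝ}

lemma lintegral_hitTime_eq (hX : ∀ i k, Measurable (X i k)) :
    ∫⁻ ω, (hitTime (frogS X ω) 0 1 : ℝ≥0∞) ∂P = ∑' k : ℕ, P (Aset X (k + 1)) := by
  have hpt : ∀ ω, (hitTime (frogS X ω) 0 1 : ℝ≥0∞)
      = ∑' k : ℕ, (Aset X (k + 1)).indicator 1 ω := by
    classical
    intro ω
    rw [enat_toENNReal_eq_tsum]
    refine tsum_congr fun k => ?_
    rw [Set.indicator_apply]
    have hmem : ω ∈ Aset X (k + 1) ↔ ((k : ℕ∞) + 1 ≤ hitTime (frogS X ω) 0 1) := by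
      simp only [Aset, Set.mem_setOf_eq, Nat.cast_add, Nat.cast_one]
    by_cases h : ω ∈ Aset X (k + 1)
    · rw [if_pos h, if_pos (hmem.mp h), Pi.one_apply]
    · rw [if_neg h, if_neg (fun hc => h (hmem.mpr hc))]
  rw [lintegral_congr hpt,
    lintegral_tsum fun k => (measurable_one.indicator (meas_Aset hX (k + 1))).aemeasurable]
  exact tsum_congr fun k => lintegral_indicator_one (meas_Aset hX (k + 1))

lemma lintegral_hitTime_le (hX : ∀ i k, Measurable (X i k))
    (hind : iIndepFun (fun ik : ℤ × ℕ => X ik.1 ik.2) P)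
    (h1 : ∀ i k, P {ω | X i k ω = 1} = ENNReal.ofReal p)
    (h2 : ∀ i k, P {ω | X i k ω = -1} = ENNReal.ofReal (1 - p))
    (hp : 1 / 2 < p) (hp1 : p < 1) :
    ∫⁻ ω, (hitTime (frogS X ω) 0 1 : ℝ≥0∞) ∂P ≤ ENNReal.ofReal (1 / (2 * p - 1)) := by
  rw [lintegral_hitTime_eq hX]
  have hmul : ENNReal.ofReal (2 * p - 1) * ∑' k : ℕ, P (Aset X (k + 1)) ≤ 1 := by
    rw [ENNReal.tsum_eq_iSup_nat, ENNReal.mul_iSup]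
    refine iSup_le fun n => ?_
    have hre : ∑ k ∈ Finset.range n, P (Aset X (k + 1)) = ∑ k ∈ Finset.Icc 1 n, P (Aset X k) := by
      rw [← Finset.Ico_add_one_right_eq_Icc, Finset.sum_Ico_eq_sum_range]
      simp [add_comm]
    rw [hre]
    exact key_sum_bound hX hind h1 h2 hp hp1 n
  have h0 : ENNReal.ofReal (2 * p - 1) ≠ 0 :=
    (ENNReal.ofReal_pos.mpr (by linarith)).ne'
  calc ∑' k : ℕ, P (Aset X (k + 1))
      ≤ 1 / ENNReal.ofReal (2 * p - 1) := by
        rw [ENNReal.le_div_iff_mul_le (Or.inl h0) (Or.inl ENNReal.ofReal_ne_top), mul_comm]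
        exact hmul
    _ = ENNReal.ofReal (1 / (2 * p - 1)) := by
        rw [ENNReal.ofReal_div_of_pos (by linarith), ENNReal.ofReal_one]

end prob3

section final

variable {Ω : Type*} [MeasurableSpace Ω] {P : Measure Ω} [IsProbabilityMeasure P]
  {X : ℤ → ℕ → Ω → ℤ} {p : ℝ}

lemma frogS_succ (ω : Ω) (i : ℤ) (m : ℕ) :
    frogS X ω i (m + 1) = frogS X ω i m + X i (m + 1) ω :=
  Finset.sum_Icc_succ_top (by omega) _

lemma frogS_zero (ω : Ω) (i : ℤ) : frogS X ω i 0 = 0 := by simp [frogS]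

lemma frogT_le_three {ω : Ω} (h01 : X 0 1 ω = -1)
    (hm1 : X (-1) 1 ω = 1) (hm2 : X (-1) 2 ω = 1) :
    frogT (frogS X ω) 1 ≤ 3 := by
  have e1 : (0 : ℤ) + frogS X ω 0 1 = -1 := by
    have e : frogS X ω 0 1 = frogS X ω 0 0 + X 0 1 ω := frogS_succ ω 0 0
    rw [e, frogS_zero]; omega
  have e2 : (-1 : ℤ) + frogS X ω (-1) 2 = 1 := by
    have e : frogS X ω (-1) 1 = frogS X ω (-1) 0 + X (-1) 1 ω := frogS_succ ω (-1) 0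
    have e2 : frogS X ω (-1) 2 = frogS X ω (-1) 1 + X (-1) 2 ω := frogS_succ ω (-1) 1
    rw [e2, e, frogS_zero]; omega
  calc frogT (frogS X ω) 1 ≤ hitTime (frogS X ω) 0 (-1) + hitTime (frogS X ω) (-1) 1 :=
        frogT_le_chain _
    _ ≤ ((1 : ℕ) : ℕ∞) + ((2 : ℕ) : ℕ∞) := add_le_add (hitTime_le e1) (hitTime_le e2)
    _ = 3 := by norm_cast

lemma five_le_hitTime {ω : Ω} (h01 : X 0 1 ω = -1) (h02 : X 0 2 ω = -1)
    (h03 : X 0 3 ω = 1 ∨ X 0 3 ω = -1) (h04 : X 0 4 ω = 1 ∨ X 0 4 ω = -1) :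
    (5 : ℕ∞) ≤ hitTime (frogS X ω) 0 1 := by
  have h5 : ((5 : ℕ) : ℕ∞) ≤ hitTime (frogS X ω) 0 1 := by
    refine le_hitTime_iff.mpr fun m hm => ?_
    have s0 : frogS X ω 0 0 = 0 := frogS_zero ω 0
    have s1 : frogS X ω 0 1 = frogS X ω 0 0 + X 0 1 ω := frogS_succ ω 0 0
    have s2 : frogS X ω 0 2 = frogS X ω 0 1 + X 0 2 ω := frogS_succ ω 0 1
    have s3 : frogS X ω 0 3 = frogS X ω 0 2 + X 0 3 ω := frogS_succ ω 0 2
    have s4 : frogS X ω 0 4 = frogS X ω 0 3 + X 0 4 ω := frogS_succ ω 0 3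
    interval_cases m <;> rcases h03 with h03 | h03 <;> rcases h04 with h04 | h04 <;> omega
  exact_mod_cast h5

theorem frog_expected_T_one_lt'
    (P : Measure Ω) [IsProbabilityMeasure P]
    (X : ℤ → ℕ → Ω → ℤ) (p : ℝ) (hmodel : IsFrogModel P X p)
    (hp : 1 / 2 < p) (hp1 : p < 1) :
    ∫⁻ ω, (frogT (frogS X ω) 1 : ℝ≥0∞) ∂P < ENNReal.ofReal (1 / (2 * p - 1)) := by
  classical
  obtain ⟨hX, hind, h1, h2⟩ := hmodel
  set Gas : Set Ω := {ω | ∀ i k, X i k ω = 1 ∨ X i k ω = -1} with hGasdef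
  have hGasae : ∀ᵐ ω ∂P, ω ∈ Gas := union_pm_ae hX h1 h2 (by linarith) (by linarith)
  have hGasmeas : MeasurableSet Gas := by
    have : Gas = ⋂ (i : ℤ) (k : ℕ), ({ω | X i k ω = 1} ∪ {ω | X i k ω = -1}) := by
      ext ω
      simp only [hGasdef, Set.mem_setOf_eq, Set.mem_iInter, Set.mem_union]
    rw [this]
    exact MeasurableSet.iInter fun i => MeasurableSet.iInter fun k =>
      ((hX i k (measurableSet_singleton 1)).union (hX i k (measurableSet_singleton (-1))))
  set E0 : Set Ω :=
    {ω | X 0 1 ω = -1 ∧ X 0 2 ω = -1 ∧ X (-1) 1 ω = 1 ∧ X (-1) 2 ω = 1} with hE0def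
  have hE0meas : MeasurableSet E0 := by
    rw [hE0def]
    simp only [Set.setOf_and]
    exact ((hX 0 1 (measurableSet_singleton (-1))).inter
      ((hX 0 2 (measurableSet_singleton (-1))).inter
      ((hX (-1) 1 (measurableSet_singleton 1)).inter
      (hX (-1) 2 (measurableSet_singleton 1)))))
  set E : Set Ω := E0 ∩ Gas with hEdef
  have hEmeas : MeasurableSet E := hE0meas.inter hGasmeas
  -- P E ≠ 0
  have hPE0 : P E0 ≠ 0 := by
    have hpairs := hind.indepFun_prodMk_prodMk (fun ik => hX ik.1 ik.2)
      ((0 : ℤ), 1) ((0 : ℤ), 2) ((-1 : ℤ), 1) ((-1 : ℤ), 2)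
      (by simp) (by simp) (by simp) (by simp)
    have hsplit : E0 = (fun ω => (X 0 1 ω, X 0 2 ω)) ⁻¹' ({-1} ×ˢ {-1})
        ∩ (fun ω => (X (-1) 1 ω, X (-1) 2 ω)) ⁻¹' ({1} ×ˢ {1}) := by
      ext ω
      simp only [hE0def, Set.mem_setOf_eq, Set.mem_inter_iff, Set.mem_preimage, Set.mem_prod,
        Set.mem_singleton_iff]
      tauto
    have hmul := hpairs.measure_inter_preimage_eq_mul (({-1} : Set ℤ) ×ˢ ({-1} : Set ℤ))
      (({1} : Set ℤ) ×ˢ ({1} : Set ℤ))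
      ((measurableSet_singleton _).prod (measurableSet_singleton _))
      ((measurableSet_singleton _).prod (measurableSet_singleton _))
    have hfac1 : P ((fun ω => (X 0 1 ω, X 0 2 ω)) ⁻¹' ({-1} ×ˢ {-1}))
        = ENNReal.ofReal (1 - p) * ENNReal.ofReal (1 - p) := by
      have hIF := hind.indepFun (show ((0 : ℤ), 1) ≠ ((0 : ℤ), 2) by simp)
      have hpre : (fun ω => (X 0 1 ω, X 0 2 ω)) ⁻¹' ({-1} ×ˢ {-1})
          = X 0 1 ⁻¹' {-1} ∩ X 0 2 ⁻¹' {-1} := by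
        ext ω; simp [Set.mem_prod]
      rw [hpre, hIF.measure_inter_preimage_eq_mul _ _ (measurableSet_singleton _)
        (measurableSet_singleton _)]
      rw [show (X 0 1 ⁻¹' {-1} : Set Ω) = {ω | X 0 1 ω = -1} from rfl,
        show (X 0 2 ⁻¹' {-1} : Set Ω) = {ω | X 0 2 ω = -1} from rfl, h2 0 1, h2 0 2]
    have hfac2 : P ((fun ω => (X (-1) 1 ω, X (-1) 2 ω)) ⁻¹' ({1} ×ˢ {1}))
        = ENNReal.ofReal p * ENNReal.ofReal p := by
      have hIF := hind.indepFun (show ((-1 : ℤ), 1) ≠ ((-1 : ℤ), 2) by simp)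
      have hpre : (fun ω => (X (-1) 1 ω, X (-1) 2 ω)) ⁻¹' ({1} ×ˢ {1})
          = X (-1) 1 ⁻¹' {1} ∩ X (-1) 2 ⁻¹' {1} := by
        ext ω; simp [Set.mem_prod]
      rw [hpre, hIF.measure_inter_preimage_eq_mul _ _ (measurableSet_singleton _)
        (measurableSet_singleton _)]
      rw [show (X (-1) 1 ⁻¹' {1} : Set Ω) = {ω | X (-1) 1 ω = 1} from rfl,
        show (X (-1) 2 ⁻¹' {1} : Set Ω) = {ω | X (-1) 2 ω = 1} from rfl, h1 (-1) 1, h1 (-1) 2]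
    rw [hsplit, hmul, hfac1, hfac2]
    have hq : ENNReal.ofReal (1 - p) ≠ 0 := (ENNReal.ofReal_pos.mpr (by linarith)).ne'
    have hq2 : ENNReal.ofReal p ≠ 0 := (ENNReal.ofReal_pos.mpr (by linarith)).ne'
    exact mul_ne_zero (mul_ne_zero hq hq) (mul_ne_zero hq2 hq2)
  have hPE : P E ≠ 0 := by
    rw [hEdef, measure_inter_conull (ae_iff.mp hGasae)]
    exact hPE0
  -- pointwise bound
  have hbound : ∀ ω, (frogT (frogS X ω) 1 : ℝ≥0∞) + E.indicator (fun _ => 2) ω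
      ≤ (hitTime (frogS X ω) 0 1 : ℝ≥0∞) := by
    intro ω
    by_cases hEω : ω ∈ E
    · have hmem := hEω
      obtain ⟨⟨h01, h02, hm1, hm2⟩, hGasω⟩ := hmem
      rw [Set.indicator_of_mem hEω]
      have c1 : (frogT (frogS X ω) 1 : ℝ≥0∞) ≤ 3 := by
        have := ENat.toENNReal_le.mpr (frogT_le_three h01 hm1 hm2)
        simpa using this
      have c2 : (5 : ℝ≥0∞) ≤ (hitTime (frogS X ω) 0 1 : ℝ≥0∞) := by
        have := ENat.toENNReal_le.mpr (five_le_hitTime h01 h02 (hGasω 0 3) (hGasω 0 4))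
        simpa using this
      calc (frogT (frogS X ω) 1 : ℝ≥0∞) + 2 ≤ 3 + 2 := add_le_add_left c1 2
        _ = 5 := by norm_num
        _ ≤ _ := c2
    · rw [Set.indicator_of_notMem hEω, add_zero]
      exact ENat.toENNReal_le.mpr (frogT_le_hitTime _)
  have hstep := lintegral_mono (μ := P) hbound
  rw [lintegral_add_right _ (measurable_const.indicator hEmeas),
    lintegral_indicator_const hEmeas] at hstep
  have hfinal : (∫⁻ ω, (frogT (frogS X ω) 1 : ℝ≥0∞) ∂P) + 2 * P E
      ≤ ENNReal.ofReal (1 / (2 * p - 1)) :=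
    hstep.trans (lintegral_hitTime_le hX hind h1 h2 hp hp1)
  have hIne : (∫⁻ ω, (frogT (frogS X ω) 1 : ℝ≥0∞) ∂P) ≠ ⊤ :=
    ne_top_of_le_ne_top ENNReal.ofReal_ne_top (le_self_add.trans hfinal)
  exact lt_of_lt_of_le (ENNReal.lt_add_right hIne (mul_ne_zero (by norm_num) hPE)) hfinal

end final

/-- **Key step of Lemma 4.**
For `1/2 < p < 1`, the expected activation time of the frog at site `1` is strictly
smaller than the expected hitting time `E[T_1^s] = 1/(2p - 1)` of the point `1` by a
single `p`-drift random walk. -/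
theorem frog_expected_T_one_lt
    {Ω : Type*} [MeasurableSpace Ω] (P : Measure Ω) [IsProbabilityMeasure P]
    (X : ℤ → ℕ → Ω → ℤ) (p : ℝ) (hmodel : IsFrogModel P X p)
    (hp : 1 / 2 < p) (hp1 : p < 1) :
    ∫⁻ ω, (frogT (frogS X ω) 1 : ℝ≥0∞) ∂P < ENNReal.ofReal (1 / (2 * p - 1)) := by
  exact frog_expected_T_one_lt' P X p hmodel hp hp1
end

section
/- For 1/2 < p < 1 and all n, k ∈ ℕ₀, the expected number a_n(k) of frogs at distance 2k below the maximum in the modified frog model satisfies E[a_n(k)] ≤ (2 − p)p / ((1 − p)(2p − 1)p^k). -/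
open MeasureTheory ProbabilityTheory Filter
open scoped ENNReal NNReal Topology

/-- One step of the modified frog model, described through the configuration
`c : ℕ → ℕ`, where `c k` is the number of active frogs at distance `2k` below the
current maximum (all active frogs share the parity of the maximum, and in the modified
model there is one sleeping frog at every site strictly to the right of the maximum and
no other sleeping frog).  `ξ k j = true` means that the `j`-th active frog at level `k`
jumps to the right in this step.  If some frog at the maximum jumps to the right, the
maximum advances by one and wakes the sleeping frog sitting there; otherwise the maximum
moves one step to the left (and a new sleeping frog is deposited on the vacated site,
which keeps the description above valid). -/
def frogStep (c : ℕ → ℕ) (ξ : ℕ → ℕ → Bool) : ℕ → ℕ :=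
  let R : ℕ → ℕ := fun k => ((Finset.range (c k)).filter fun j => ξ k j = true).card
  let L : ℕ → ℕ := fun k => c k - R k
  if 0 < R 0 then fun k => if k = 0 then R 0 + 1 else R k + L (k - 1)
  else fun k => R (k + 1) + L k

/-- The configuration of the modified frog model at time `n`, driven by the i.i.d.
jump decisions `ξ t k j` (time `t`, level `k`, frog `j`): `frogConfig ξ n k` is the
number of active frogs at distance `2k` below the maximum `M_n^mod` at time `n`.
Initially there is a single active frog at the maximum. -/
def frogConfig (ξ : ℕ → ℕ → ℕ → Bool) : ℕ → ℕ → ℕ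
  | 0 => fun k => if k = 0 then 1 else 0
  | n + 1 => frogStep (frogConfig ξ n) (ξ n)

/-- The random input of the modified frog model: i.i.d. Bernoulli(`p`) jump decisions. -/
structure IsFrogCoins {Ω : Type*} [MeasurableSpace Ω] (P : Measure Ω)
    (ξ : ℕ → ℕ → ℕ → Ω → Bool) (p : ℝ) : Prop where
  meas : ∀ t k j, Measurable (ξ t k j)
  indep : iIndepFun (fun t : ℕ × ℕ × ℕ => ξ t.1 t.2.1 t.2.2) P
  prob_true : ∀ t k j, P {ω | ξ t k j ω = true} = ENNReal.ofReal p

namespace FrogAux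

/-- number of frogs at level `l` jumping right -/
def Rc (c : ℕ → ℕ) (ξ : ℕ → ℕ → Bool) (l : ℕ) : ℕ :=
  ((Finset.range (c l)).filter fun j => ξ l j = true).card

/-- number of frogs at level `l` jumping left -/
def Lc (c : ℕ → ℕ) (ξ : ℕ → ℕ → Bool) (l : ℕ) : ℕ :=
  ((Finset.range (c l)).filter fun j => ξ l j = false).card

lemma Rc_le (c : ℕ → ℕ) (ξ : ℕ → ℕ → Bool) (l : ℕ) : Rc c ξ l ≤ c l := by
  simpa [Rc] using (Finset.card_filter_le (Finset.range (c l)) _)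

lemma Lc_le (c : ℕ → ℕ) (ξ : ℕ → ℕ → Bool) (l : ℕ) : Lc c ξ l ≤ c l := by
  simpa [Lc] using (Finset.card_filter_le (Finset.range (c l)) _)

lemma Rc_add_Lc (c : ℕ → ℕ) (ξ : ℕ → ℕ → Bool) (l : ℕ) : Rc c ξ l + Lc c ξ l = c l := by
  classical
  have h := Finset.card_filter_add_card_filter_not
    (s := Finset.range (c l)) (p := fun j => ξ l j = true)
  have h2 : (Finset.filter (fun j => ¬ (ξ l j = true)) (Finset.range (c l)))
      = (Finset.filter (fun j => ξ l j = false) (Finset.range (c l))) := by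
    apply Finset.filter_congr
    intro j _
    simp
  rw [h2] at h
  simpa [Rc, Lc] using h

lemma sub_Rc (c : ℕ → ℕ) (ξ : ℕ → ℕ → Bool) (l : ℕ) : c l - Rc c ξ l = Lc c ξ l := by
  have := Rc_add_Lc c ξ l
  omega

lemma frogStep_apply (c : ℕ → ℕ) (ξ : ℕ → ℕ → Bool) (k : ℕ) :
    frogStep c ξ k = if 0 < Rc c ξ 0 then
      (if k = 0 then Rc c ξ 0 + 1 else Rc c ξ k + Lc c ξ (k - 1))
    else Rc c ξ (k + 1) + Lc c ξ k := by
  rw [show frogStep c ξ = (if 0 < Rc c ξ 0 then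
      (fun k => if k = 0 then Rc c ξ 0 + 1 else Rc c ξ k + (c (k-1) - Rc c ξ (k-1)))
      else (fun k => Rc c ξ (k+1) + (c k - Rc c ξ k))) from rfl]
  by_cases h : 0 < Rc c ξ 0
  · simp only [h, if_true, sub_Rc]
  · simp only [h, if_false, sub_Rc]

/-- total bound on occupation numbers -/
lemma frogConfig_le (ξ : ℕ → ℕ → ℕ → Bool) : ∀ n k, frogConfig ξ n k ≤ 3 ^ n := by
  intro n
  induction n with
  | zero => intro k; by_cases h : k = 0 <;> simp [frogConfig, h]
  | succ n ih =>
    intro k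
    have h3 : (3:ℕ)^n + 3^n ≤ 3^(n+1) := by ring_nf; omega
    rw [show frogConfig ξ (n+1) = frogStep (frogConfig ξ n) (ξ n) from rfl,
      frogStep_apply]
    set c := frogConfig ξ n
    by_cases hA : 0 < Rc c (ξ n) 0
    · simp only [hA, if_true]
      by_cases hk : k = 0
      · simp only [hk, if_true]
        have := Rc_le c (ξ n) 0
        have := ih 0
        have h1 : (1:ℕ) ≤ 3 ^ n := Nat.one_le_pow _ _ (by norm_num)
        omega
      · simp only [hk, if_false]
        have := Rc_le c (ξ n) k
        have := Lc_le c (ξ n) (k-1)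
        have := ih k
        have := ih (k-1)
        omega
    · simp only [hA, if_false]
      have := Rc_le c (ξ n) (k+1)
      have := Lc_le c (ξ n) k
      have := ih (k+1)
      have := ih k
      omega

/-- P1 : there is always at least one frog at the maximum -/
lemma frogConfig_zero_pos (ξ : ℕ → ℕ → ℕ → Bool) : ∀ n, 1 ≤ frogConfig ξ n 0 := by
  intro n
  induction n with
  | zero => simp [frogConfig]
  | succ n ih =>
    rw [show frogConfig ξ (n+1) = frogStep (frogConfig ξ n) (ξ n) from rfl,
      frogStep_apply]
    set c := frogConfig ξ n
    by_cases hA : 0 < Rc c (ξ n) 0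
    · simp [hA]
    · simp only [hA, if_false]
      have h0 : Rc c (ξ n) 0 = 0 := by omega
      have := Rc_add_Lc c (ξ n) 0
      have := ih
      omega

/-- P2 : if there is a single frog at the maximum, no other frog is active -/
lemma frogConfig_eq_single (ξ : ℕ → ℕ → ℕ → Bool) :
    ∀ n, frogConfig ξ n 0 = 1 → ∀ k, k ≠ 0 → frogConfig ξ n k = 0 := by
  intro n
  induction n with
  | zero => intro _ k hk; simp [frogConfig, hk]
  | succ n ih =>
    intro h1 k hk
    rw [show frogConfig ξ (n+1) = frogStep (frogConfig ξ n) (ξ n) from rfl,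
      frogStep_apply] at h1 ⊢
    set c := frogConfig ξ n with hc
    by_cases hA : 0 < Rc c (ξ n) 0
    · simp only [hA, if_true, if_pos rfl] at h1
      omega
    · simp only [hA, if_false] at h1 ⊢
      -- B-case : c 0 = 1 and R 1 = 0
      have h0 : Rc c (ξ n) 0 = 0 := by omega
      have hRL0 := Rc_add_Lc c (ξ n) 0
      have hc0 : 1 ≤ c 0 := frogConfig_zero_pos ξ n
      have hL0 : Lc c (ξ n) 0 = c 0 := by omega
      rw [hL0] at h1
      have hc01 : c 0 = 1 := by
        have := Rc_le c (ξ n) 1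
        omega
      have hzero : ∀ m, m ≠ 0 → c m = 0 := ih hc01
      have hz1 : c (k+1) = 0 := hzero _ (by omega)
      have hzk : c k = 0 := hzero _ hk
      have := Rc_le c (ξ n) (k+1)
      have := Lc_le c (ξ n) k
      omega

/-- `frogStep` at level `k` only depends on the configuration at levels `≤ k+1`. -/
lemma frogStep_congr_levels (c c' : ℕ → ℕ) (ξ : ℕ → ℕ → Bool) (k : ℕ)
    (h : ∀ l, l ≤ k + 1 → c l = c' l) : frogStep c ξ k = frogStep c' ξ k := by
  have hR : ∀ l, l ≤ k + 1 → Rc c ξ l = Rc c' ξ l := by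
    intro l hl; unfold Rc; rw [h l hl]
  have hL : ∀ l, l ≤ k + 1 → Lc c ξ l = Lc c' ξ l := by
    intro l hl; unfold Lc; rw [h l hl]
  rw [frogStep_apply, frogStep_apply, hR 0 (by omega)]
  by_cases hA : 0 < Rc c' ξ 0
  · simp only [hA, if_true]
    by_cases hk : k = 0
    · simp [hk]
    · simp only [hk, if_false]
      rw [hR k (by omega), hL (k-1) (by omega)]
  · simp only [hA, if_false]
    rw [hR (k+1) (by omega), hL k (by omega)]

/-- `frogStep` at level `k` only depends on the coins at levels `≤ k+1` below the frogs. -/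
lemma frogStep_congr_coins (c : ℕ → ℕ) (ξ ξ' : ℕ → ℕ → Bool) (k : ℕ)
    (h : ∀ l j, l ≤ k + 1 → j < c l → ξ l j = ξ' l j) : frogStep c ξ k = frogStep c ξ' k := by
  have hR : ∀ l, l ≤ k + 1 → Rc c ξ l = Rc c ξ' l := by
    intro l hl; unfold Rc
    congr 1
    apply Finset.filter_congr
    intro j hj
    rw [h l j hl (Finset.mem_range.mp hj)]
  have hL : ∀ l, l ≤ k + 1 → Lc c ξ l = Lc c ξ' l := by
    intro l hl; unfold Lc
    congr 1
    apply Finset.filter_congr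
    intro j hj
    rw [h l j hl (Finset.mem_range.mp hj)]
  rw [frogStep_apply, frogStep_apply, hR 0 (by omega)]
  by_cases hA : 0 < Rc c ξ' 0
  · simp only [hA, if_true]
    by_cases hk : k = 0
    · simp [hk, hR 0 (by omega)]
    · simp only [hk, if_false]
      rw [hR k (by omega), hL (k-1) (by omega)]
  · simp only [hA, if_false]
    rw [hR (k+1) (by omega), hL k (by omega)]

/-- the configuration at time `n`, level `l`, only depends on finitely many coins. -/
lemma frogConfig_congr (ξ ξ' : ℕ → ℕ → ℕ → Bool) :
    ∀ n l, (∀ t m j, t < n → m ≤ n + l → j < 3 ^ t → ξ t m j = ξ' t m j) →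
    frogConfig ξ n l = frogConfig ξ' n l := by
  intro n
  induction n with
  | zero => intro l _; rfl
  | succ n ih =>
    intro l h
    show frogStep (frogConfig ξ n) (ξ n) l = frogStep (frogConfig ξ' n) (ξ' n) l
    have h1 : frogStep (frogConfig ξ n) (ξ n) l = frogStep (frogConfig ξ' n) (ξ n) l := by
      apply frogStep_congr_levels
      intro m hm
      apply ih m
      intro t m' j ht hm' hj
      exact h t m' j (by omega) (by omega) hj
    have h2 : frogStep (frogConfig ξ' n) (ξ n) l = frogStep (frogConfig ξ' n) (ξ' n) l := by
      apply frogStep_congr_coins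
      intro m j hm hj
      have hb : j < 3 ^ n := lt_of_lt_of_le hj (frogConfig_le ξ' n m)
      exact h n m j (by omega) (by omega) hb
    rw [h1, h2]

end FrogAux

namespace FrogAux
set_option linter.unusedSectionVars false

section Prob

variable {Ω : Type*} [MeasurableSpace Ω] {P : Measure Ω} [IsProbabilityMeasure P]
  {ξ : ℕ → ℕ → ℕ → Ω → Bool} {p : ℝ}

/-- probability of a right jump, as an extended nonneg real -/
noncomputable def pe (p : ℝ) : ℝ≥0∞ := ENNReal.ofReal p

/-- probability of a left jump, as an extended nonneg real -/
noncomputable def qe (p : ℝ) : ℝ≥0∞ := 1 - ENNReal.ofReal p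

variable (hc : IsFrogCoins P ξ p) (hp : 1 / 2 < p) (hp1 : p < 1)

lemma pe_le_one (hp1 : p < 1) : pe p ≤ 1 := ENNReal.ofReal_le_one.mpr hp1.le

lemma pe_add_qe (hp1 : p < 1) : pe p + qe p = 1 :=
  add_tsub_cancel_of_le (pe_le_one hp1)

lemma qe_le_pe (hp : 1 / 2 < p) : qe p ≤ pe p := by
  rw [qe, pe, tsub_le_iff_right]
  have h1 : (1 : ℝ≥0∞) = ENNReal.ofReal 1 := ENNReal.ofReal_one.symm
  rw [h1, ← ENNReal.ofReal_add (by linarith) (by linarith)]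
  exact ENNReal.ofReal_le_ofReal (by linarith)

lemma qe_le_one : qe p ≤ 1 := tsub_le_self.trans le_rfl

lemma two_qe_le_one (hp : 1 / 2 < p) (hp1 : p < 1) : 2 * qe p ≤ 1 := by
  rw [two_mul]
  calc qe p + qe p ≤ qe p + pe p := by exact add_le_add_right (qe_le_pe hp) _
  _ = 1 := by rw [add_comm]; exact pe_add_qe hp1

lemma measurableSet_coin (hc : IsFrogCoins P ξ p) (t l j : ℕ) (b : Bool) :
    MeasurableSet {ω | ξ t l j ω = b} :=
  (hc.meas t l j) (measurableSet_singleton b)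

lemma prob_coin (hc : IsFrogCoins P ξ p) (t l j : ℕ) (b : Bool) :
    P {ω | ξ t l j ω = b} = if b = true then pe p else qe p := by
  cases b with
  | true => simpa [pe] using hc.prob_true t l j
  | false =>
    have hcompl : {ω | ξ t l j ω = false} = {ω | ξ t l j ω = true}ᶜ := by
      ext ω; simp
    rw [hcompl, measure_compl (measurableSet_coin hc t l j true) (measure_ne_top _ _),
      hc.prob_true t l j]
    simp [qe, measure_univ]

/-- product formula for finitely many distinct coins -/
lemma coin_prod (hc : IsFrogCoins P ξ p) (s : Finset (ℕ × ℕ × ℕ)) (b : ℕ × ℕ × ℕ → Bool) :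
    P (⋂ i ∈ s, {ω | ξ i.1 i.2.1 i.2.2 ω = b i})
      = ∏ i ∈ s, (if b i = true then pe p else qe p) := by
  have h := hc.indep.measure_inter_preimage_eq_mul (S := s)
    (sets := fun i => ({b i} : Set Bool)) (fun i _ => trivial)
  have hpre : ∀ i : ℕ × ℕ × ℕ,
      (fun ω => ξ i.1 i.2.1 i.2.2 ω) ⁻¹' ({b i} : Set Bool) = {ω | ξ i.1 i.2.1 i.2.2 ω = b i} := by
    intro i; ext ω; simp
  simp only [hpre] at h
  rw [h]
  exact Finset.prod_congr rfl fun i _ => prob_coin hc i.1 i.2.1 i.2.2 (b i)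

/-- the event that all coins at the maximum (level `0`) at time `n` show `false` -/
def Bev (ξ : ℕ → ℕ → ℕ → Ω → Bool) (n a : ℕ) : Set Ω :=
  ⋂ j ∈ Finset.range a, {ω | ξ n 0 j ω = false}

lemma measurableSet_Bev (hc : IsFrogCoins P ξ p) (n a : ℕ) : MeasurableSet (Bev ξ n a) :=
  MeasurableSet.biInter (Finset.range a).countable_toSet
    (fun j _ => measurableSet_coin hc n 0 j false)

lemma prob_Bev (hc : IsFrogCoins P ξ p) (n a : ℕ) : P (Bev ξ n a) = qe p ^ a := by
  have hinj : Function.Injective (fun j : ℕ => ((n, 0, j) : ℕ × ℕ × ℕ)) := by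
    intro i j h; simpa using h
  have hset : Bev ξ n a
      = ⋂ i ∈ (Finset.range a).image (fun j => ((n, 0, j) : ℕ × ℕ × ℕ)),
        {ω | ξ i.1 i.2.1 i.2.2 ω = (fun _ => false) i} := by
    ext ω
    simp [Bev, Finset.mem_image]
  rw [hset, coin_prod hc _ (fun _ => false), Finset.prod_image (fun i _ j _ h => hinj h)]
  simp

/-- the B-event intersected with one more coin at a level `l ≠ 0` -/
lemma prob_Bev_inter_coin (hc : IsFrogCoins P ξ p) (n a l i : ℕ) (hl : l ≠ 0) (b : Bool) :
    P (Bev ξ n a ∩ {ω | ξ n l i ω = b}) = qe p ^ a * (if b = true then pe p else qe p) := by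
  classical
  have hinj : Function.Injective (fun j : ℕ => ((n, 0, j) : ℕ × ℕ × ℕ)) := by
    intro i j h; simpa using h
  set s0 : Finset (ℕ × ℕ × ℕ) := (Finset.range a).image (fun j => ((n, 0, j) : ℕ × ℕ × ℕ))
    with hs0def
  have hmem0 : ∀ x ∈ s0, x.2.1 = 0 := by
    intro x hx
    simp only [hs0def, Finset.mem_image, Finset.mem_range] at hx
    obtain ⟨j, _, rfl⟩ := hx
    rfl
  have hnm : ((n, l, i) : ℕ × ℕ × ℕ) ∉ s0 := by
    intro hx
    exact hl ((hmem0 _ hx).symm ▸ rfl)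
  set bf : ℕ × ℕ × ℕ → Bool := fun x => if x = (n, l, i) then b else false with hbfdef
  have hbf0 : ∀ x ∈ s0, bf x = false := by
    intro x hx
    have hxne : x ≠ (n, l, i) := by
      intro hcontra; rw [hcontra] at hx; exact hnm hx
    simp only [hbfdef]
    rw [if_neg hxne]
  set S : ℕ × ℕ × ℕ → Set Ω := fun x => {ω | ξ x.1 x.2.1 x.2.2 ω = bf x} with hSdef
  have hS2 : ⋂ x ∈ s0, S x = Bev ξ n a := by
    have hcongr : ⋂ x ∈ s0, S x = ⋂ x ∈ s0, {ω | ξ x.1 x.2.1 x.2.2 ω = false} := by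
      apply Set.iInter₂_congr
      intro x hx
      rw [hSdef]
      simp only [hbf0 x hx]
    rw [hcongr, hs0def, Finset.set_biInter_finset_image]
    rfl
  have hS1 : S ((n, l, i) : ℕ × ℕ × ℕ) = {ω | ξ n l i ω = b} := by
    rw [hSdef]
    simp [hbfdef]
  have hset : Bev ξ n a ∩ {ω | ξ n l i ω = b}
      = ⋂ x ∈ insert ((n, l, i) : ℕ × ℕ × ℕ) s0, S x := by
    rw [Finset.set_biInter_insert, hS1, hS2, Set.inter_comm]
  rw [hset, coin_prod hc _ bf, Finset.prod_insert hnm]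
  have h1 : bf (n, l, i) = b := by simp [hbfdef]
  have h2 : ∏ x ∈ s0, (if bf x = true then pe p else qe p) = qe p ^ a := by
    rw [Finset.prod_congr rfl (g := fun _ => qe p) ?_]
    · rw [Finset.prod_const, hs0def, Finset.card_image_of_injective _ hinj, Finset.card_range]
    · intro x hx
      simp [hbf0 x hx]
  rw [h1, h2, mul_comm]

end Prob
end FrogAux

namespace FrogAux
set_option linter.unusedSectionVars false

section Config

variable {Ω : Type*} [MeasurableSpace Ω] {P : Measure Ω} [IsProbabilityMeasure P]
  {ξ : ℕ → ℕ → ℕ → Ω → Bool} {p : ℝ}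

lemma cast_card_filter (n : ℕ) (v : ℕ → ℕ) (l : ℕ) (b : Bool) (ω : Ω) :
    (((Finset.range (v l)).filter (fun j => ξ n l j ω = b)).card : ℝ≥0∞)
      = ∑ j ∈ Finset.range (v l),
          ({ω' : Ω | ξ n l j ω' = b}).indicator (fun _ => (1 : ℝ≥0∞)) ω := by
  rw [Finset.card_filter]
  push_cast
  apply Finset.sum_congr rfl
  intro j _
  rw [Set.indicator_apply]
  by_cases hj : ξ n l j ω = b <;> simp [hj]

lemma measurable_cast_card (hc : IsFrogCoins P ξ p) (n : ℕ) (v : ℕ → ℕ) (l : ℕ) (b : Bool) :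
    Measurable (fun ω : Ω =>
      (((Finset.range (v l)).filter (fun j => ξ n l j ω = b)).card : ℝ≥0∞)) := by
  have h : (fun ω : Ω =>
      (((Finset.range (v l)).filter (fun j => ξ n l j ω = b)).card : ℝ≥0∞))
      = fun ω => ∑ j ∈ Finset.range (v l),
          ({ω' : Ω | ξ n l j ω' = b}).indicator (fun _ => (1 : ℝ≥0∞)) ω :=
    funext (cast_card_filter n v l b)
  rw [h]
  exact Finset.measurable_sum _ fun j _ =>
    measurable_const.indicator (measurableSet_coin hc n l j b)

lemma lintegral_indicator_count (hc : IsFrogCoins P ξ p) (n : ℕ) (v : ℕ → ℕ)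
    {E : Set Ω} (hE : MeasurableSet E) (l : ℕ) (b : Bool) :
    ∫⁻ ω, E.indicator (fun ω' =>
        (((Finset.range (v l)).filter (fun j => ξ n l j ω' = b)).card : ℝ≥0∞)) ω ∂P
      = ∑ j ∈ Finset.range (v l), P (E ∩ {ω | ξ n l j ω = b}) := by
  have hpt : (fun ω => E.indicator (fun ω' =>
      (((Finset.range (v l)).filter (fun j => ξ n l j ω' = b)).card : ℝ≥0∞)) ω)
      = fun ω => ∑ j ∈ Finset.range (v l),
          (E ∩ {ω' : Ω | ξ n l j ω' = b}).indicator (fun _ => (1 : ℝ≥0∞)) ω := by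
    classical
    funext ω
    rw [Set.indicator_apply]
    by_cases hω : ω ∈ E
    · rw [if_pos hω, cast_card_filter]
      apply Finset.sum_congr rfl
      intro j _
      rw [Set.indicator_apply, Set.indicator_apply]
      by_cases hj : ω ∈ {ω' : Ω | ξ n l j ω' = b}
      · rw [if_pos hj, if_pos ⟨hω, hj⟩]
      · rw [if_neg hj, if_neg (fun hmem => hj hmem.2)]
    · rw [if_neg hω]
      symm
      apply Finset.sum_eq_zero
      intro j _
      rw [Set.indicator_apply, if_neg (fun hmem => hω hmem.1)]
  rw [hpt, lintegral_finset_sum' _ (fun j _ =>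
    (measurable_const.indicator (hE.inter (measurableSet_coin hc n l j b))).aemeasurable)]
  apply Finset.sum_congr rfl
  intro j _
  rw [lintegral_indicator_const (hE.inter (measurableSet_coin hc n l j b)), one_mul]

lemma lintegral_indicator_one'' {E : Set Ω} (hE : MeasurableSet E) :
    ∫⁻ ω, E.indicator (fun _ => (1 : ℝ≥0∞)) ω ∂P = P E := by
  rw [lintegral_indicator_const hE, one_mul]

/-- scalar inequality : `(pe - x*pe) + x*qe ≤ pe` -/
lemma sc1 (hp : 1 / 2 < p) (hp1 : p < 1) {x : ℝ≥0∞} (hx : x ≤ 1) :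
    (pe p - x * pe p) + x * qe p ≤ pe p := by
  have h1 : x * qe p ≤ x * pe p := mul_le_mul_right (qe_le_pe hp) x
  have h2 : x * pe p ≤ pe p := by
    calc x * pe p ≤ 1 * pe p := mul_le_mul_left hx _
    _ = pe p := one_mul _
  calc (pe p - x * pe p) + x * qe p ≤ (pe p - x * pe p) + x * pe p := add_le_add_right h1 _
  _ = pe p := tsub_add_cancel_of_le h2

/-- scalar inequality : `(a-1) * qe^a ≤ qe^2` for `a ≥ 1`, `qe ≤ 1/2` -/
lemma sc3 (hp : 1 / 2 < p) (hp1 : p < 1) (a : ℕ) :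
    (((a - 1 : ℕ)) : ℝ≥0∞) * qe p ^ a ≤ qe p ^ 2 := by
  match a with
  | 0 => simp
  | 1 => simp
  | (m + 2) =>
    have h1 : ((m + 2 - 1 : ℕ) : ℝ≥0∞) = ((m + 1 : ℕ) : ℝ≥0∞) := by norm_num
    rw [h1]
    have h2 : qe p ^ (m + 2) = qe p ^ m * qe p ^ 2 := by ring
    rw [h2, ← mul_assoc]
    have h3 : ((m + 1 : ℕ) : ℝ≥0∞) * qe p ^ m ≤ 1 := by
      have hm2 : ((m + 1 : ℕ) : ℝ≥0∞) ≤ (2 : ℝ≥0∞) ^ m := by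
        have : (m + 1 : ℕ) ≤ 2 ^ m := Nat.lt_two_pow_self
        calc ((m + 1 : ℕ) : ℝ≥0∞) ≤ ((2 ^ m : ℕ) : ℝ≥0∞) := Nat.cast_le.mpr this
        _ = (2 : ℝ≥0∞) ^ m := by push_cast; ring
      calc ((m + 1 : ℕ) : ℝ≥0∞) * qe p ^ m ≤ (2 : ℝ≥0∞) ^ m * qe p ^ m :=
            mul_le_mul_left hm2 _
      _ = (2 * qe p) ^ m := by rw [mul_pow]
      _ ≤ 1 := pow_le_one' (two_qe_le_one hp hp1) m
    calc ((m + 1 : ℕ) : ℝ≥0∞) * qe p ^ m * qe p ^ 2 ≤ 1 * qe p ^ 2 :=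
          mul_le_mul_left h3 _
    _ = qe p ^ 2 := one_mul _

/-- scalar inequality : `(1 - qe^a) + a * qe^a ≤ 1 + qe^2` for `a ≥ 1` -/
lemma sc2 (hp : 1 / 2 < p) (hp1 : p < 1) (a : ℕ) (ha : 1 ≤ a) :
    (1 - qe p ^ a) + (a : ℝ≥0∞) * qe p ^ a ≤ 1 + qe p ^ 2 := by
  have hx1 : qe p ^ a ≤ 1 := pow_le_one' qe_le_one a
  have hsplit : (a : ℝ≥0∞) = 1 + ((a - 1 : ℕ) : ℝ≥0∞) := by
    have : a = 1 + (a - 1) := by omega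
    rw [this]
    push_cast
    norm_num
  rw [hsplit, add_mul, one_mul, ← add_assoc]
  have h1 : (1 - qe p ^ a) + qe p ^ a = 1 := tsub_add_cancel_of_le hx1
  rw [h1]
  exact add_le_add_right (sc3 hp hp1 a) 1

/-- the B-event characterization of the step -/
lemma mem_Bev_iff (n : ℕ) (v : ℕ → ℕ) (ω : Ω) :
    ω ∈ Bev ξ n (v 0) ↔ ¬ (0 < Rc v (fun l j => ξ n l j ω) 0) := by
  rw [Rc]
  constructor
  · intro h hpos
    rw [Finset.card_pos, Finset.filter_nonempty_iff] at hpos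
    obtain ⟨j, hj, htrue⟩ := hpos
    have hmem := Set.mem_iInter₂.mp h j hj
    rw [Set.mem_setOf_eq] at hmem
    rw [htrue] at hmem
    exact Bool.noConfusion hmem
  · intro h
    apply Set.mem_iInter₂.mpr
    intro j hj
    rw [Set.mem_setOf_eq]
    by_contra hne
    have htrue : ξ n 0 j ω = true := by
      cases hval : ξ n 0 j ω
      · exact absurd hval hne
      · rfl
    apply h
    rw [Finset.card_pos, Finset.filter_nonempty_iff]
    exact ⟨j, hj, htrue⟩

end Config
end FrogAux

namespace FrogAux
set_option linter.unusedSectionVars false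
set_option maxHeartbeats 1000000

section ConfigStep

variable {Ω : Type*} [MeasurableSpace Ω] {P : Measure Ω} [IsProbabilityMeasure P]
  {ξ : ℕ → ℕ → ℕ → Ω → Bool} {p : ℝ}

/-- one-step conditional expectation bound, for a fixed admissible configuration `v` -/
lemma config_step (hc : IsFrogCoins P ξ p) (hp : 1 / 2 < p) (hp1 : p < 1)
    (n k : ℕ) (v : ℕ → ℕ) (hv0 : 1 ≤ v 0) (hP2 : v 0 = 1 → v (k + 1) = 0) :
    ∫⁻ ω, ((frogStep v (fun l j => ξ n l j ω) k : ℕ) : ℝ≥0∞) ∂P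
      ≤ pe p * (v k : ℝ≥0∞) + (if k = 0 then 1 + qe p ^ 2 else qe p * (v (k - 1) : ℝ≥0∞))
        + pe p * qe p ^ 2 * (v (k + 1) : ℝ≥0∞) := by
  classical
  set B : Set Ω := Bev ξ n (v 0) with hB
  have hBmeas : MeasurableSet B := measurableSet_Bev hc n (v 0)
  have hAmeas : MeasurableSet Bᶜ := hBmeas.compl
  set cnt : ℕ → Bool → Ω → ℝ≥0∞ := fun l b ω =>
    (((Finset.range (v l)).filter (fun j => ξ n l j ω = b)).card : ℝ≥0∞) with hcnt
  have hmcnt : ∀ l b, Measurable (cnt l b) := fun l b => measurable_cast_card hc n v l b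
  -- suppressed inflow from level `k+1`
  have hin : (v (k + 1) : ℝ≥0∞) * (qe p ^ (v 0) * pe p)
      ≤ pe p * qe p ^ 2 * (v (k + 1) : ℝ≥0∞) := by
    rcases Nat.lt_or_ge (v 0) 2 with h2 | h2
    · have hv01 : v 0 = 1 := by omega
      rw [hP2 hv01]
      simp
    · have hpow : qe p ^ (v 0) ≤ qe p ^ 2 := pow_le_pow_right_of_le_one' qe_le_one h2
      calc (v (k + 1) : ℝ≥0∞) * (qe p ^ (v 0) * pe p)
          ≤ (v (k + 1) : ℝ≥0∞) * (qe p ^ 2 * pe p) :=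
            mul_le_mul_right (mul_le_mul_left hpow _) _
      _ = pe p * qe p ^ 2 * (v (k + 1) : ℝ≥0∞) := by ring
  -- third group : inflow from level k+1 on the B-event
  have hsum3 : ∑ j ∈ Finset.range (v (k + 1)), P (B ∩ {ω | ξ n (k + 1) j ω = true})
      ≤ pe p * qe p ^ 2 * (v (k + 1) : ℝ≥0∞) := by
    calc ∑ j ∈ Finset.range (v (k + 1)), P (B ∩ {ω | ξ n (k + 1) j ω = true})
        = ∑ _j ∈ Finset.range (v (k + 1)), qe p ^ (v 0) * pe p := by
          apply Finset.sum_congr rfl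
          intro j _
          rw [hB, prob_Bev_inter_coin hc n (v 0) (k + 1) j (Nat.succ_ne_zero k) true]
          simp
    _ = (v (k + 1) : ℝ≥0∞) * (qe p ^ (v 0) * pe p) := by
          rw [Finset.sum_const, Finset.card_range, nsmul_eq_mul]
    _ ≤ _ := hin
  -- membership rewriting for the step condition
  have hcond : ∀ ω : Ω, ω ∈ B ↔ ¬ (0 < Rc v (fun l j => ξ n l j ω) 0) :=
    fun ω => mem_Bev_iff n v ω
  by_cases hk : k = 0
  · -- k = 0
    subst hk
    have hpt : (fun ω => ((frogStep v (fun l j => ξ n l j ω) 0 : ℕ) : ℝ≥0∞))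
        = fun ω => (Bᶜ.indicator (cnt 0 true) ω + Bᶜ.indicator (fun _ => (1 : ℝ≥0∞)) ω)
          + (B.indicator (cnt 1 true) ω + B.indicator (cnt 0 false) ω) := by
      funext ω
      rw [frogStep_apply]
      by_cases hω : ω ∈ B
      · rw [if_neg ((hcond ω).mp hω)]
        rw [Set.indicator_of_notMem (by simpa using hω), Set.indicator_of_notMem
          (by simpa using hω), Set.indicator_of_mem hω, Set.indicator_of_mem hω]
        simp only [zero_add, add_zero, hcnt, Rc, Lc]
        push_cast
        ring
      · rw [if_pos (by_contra fun hcon => hω ((hcond ω).mpr hcon)), if_pos rfl]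
        rw [Set.indicator_of_mem (Set.mem_compl hω), Set.indicator_of_mem (Set.mem_compl hω),
          Set.indicator_of_notMem hω, Set.indicator_of_notMem hω]
        simp only [add_zero, hcnt, Rc, Lc]
        push_cast
        ring
    rw [hpt]
    rw [lintegral_add_left (((hmcnt 0 true).indicator hAmeas).fun_add
      (measurable_const.indicator hAmeas))]
    rw [lintegral_add_left ((hmcnt 0 true).indicator hAmeas)]
    rw [lintegral_add_left ((hmcnt 1 true).indicator hBmeas)]
    rw [lintegral_indicator_count hc n v hAmeas 0 true,
      lintegral_indicator_count hc n v hBmeas 1 true,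
      lintegral_indicator_count hc n v hBmeas 0 false,
      lintegral_indicator_one'' hAmeas]
    -- bounds
    have h1 : ∑ j ∈ Finset.range (v 0), P (Bᶜ ∩ {ω | ξ n 0 j ω = true})
        ≤ pe p * (v 0 : ℝ≥0∞) := by
      calc ∑ j ∈ Finset.range (v 0), P (Bᶜ ∩ {ω | ξ n 0 j ω = true})
          ≤ ∑ j ∈ Finset.range (v 0), pe p := by
            apply Finset.sum_le_sum
            intro j _
            calc P (Bᶜ ∩ {ω | ξ n 0 j ω = true}) ≤ P {ω | ξ n 0 j ω = true} :=
                  measure_mono Set.inter_subset_right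
            _ = pe p := by rw [prob_coin hc n 0 j true]; simp
      _ = pe p * (v 0 : ℝ≥0∞) := by
            rw [Finset.sum_const, Finset.card_range, nsmul_eq_mul, mul_comm]
    have h4 : ∑ j ∈ Finset.range (v 0), P (B ∩ {ω | ξ n 0 j ω = false})
        = (v 0 : ℝ≥0∞) * qe p ^ (v 0) := by
      have hBF : ∀ j ∈ Finset.range (v 0), B ∩ {ω | ξ n 0 j ω = false} = B := by
        intro j hj
        apply Set.inter_eq_self_of_subset_left
        intro ω hω
        exact Set.mem_iInter₂.mp hω j hj
      calc ∑ j ∈ Finset.range (v 0), P (B ∩ {ω | ξ n 0 j ω = false})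
          = ∑ _j ∈ Finset.range (v 0), qe p ^ (v 0) := by
            apply Finset.sum_congr rfl
            intro j hj
            rw [hBF j hj, hB, prob_Bev hc n (v 0)]
      _ = (v 0 : ℝ≥0∞) * qe p ^ (v 0) := by
            rw [Finset.sum_const, Finset.card_range, nsmul_eq_mul]
    have h2 : P Bᶜ = 1 - qe p ^ (v 0) := by
      rw [measure_compl hBmeas (measure_ne_top _ _), hB, prob_Bev hc n (v 0), measure_univ]
    have h24 : P Bᶜ + ∑ j ∈ Finset.range (v 0), P (B ∩ {ω | ξ n 0 j ω = false})
        ≤ 1 + qe p ^ 2 := by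
      rw [h2, h4]
      exact sc2 hp hp1 (v 0) hv0
    calc ∑ j ∈ Finset.range (v 0), P (Bᶜ ∩ {ω | ξ n 0 j ω = true}) + P Bᶜ
          + (∑ j ∈ Finset.range (v 1), P (B ∩ {ω | ξ n 1 j ω = true})
            + ∑ j ∈ Finset.range (v 0), P (B ∩ {ω | ξ n 0 j ω = false}))
        = (∑ j ∈ Finset.range (v 0), P (Bᶜ ∩ {ω | ξ n 0 j ω = true}))
          + (P Bᶜ + ∑ j ∈ Finset.range (v 0), P (B ∩ {ω | ξ n 0 j ω = false}))
          + ∑ j ∈ Finset.range (v 1), P (B ∩ {ω | ξ n 1 j ω = true}) := by ring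
    _ ≤ pe p * (v 0 : ℝ≥0∞) + (1 + qe p ^ 2) + pe p * qe p ^ 2 * (v 1 : ℝ≥0∞) := by
          exact add_le_add (add_le_add h1 h24) hsum3
    _ = pe p * (v 0 : ℝ≥0∞) + (if 0 = 0 then 1 + qe p ^ 2 else qe p * (v (0 - 1) : ℝ≥0∞))
          + pe p * qe p ^ 2 * (v (0 + 1) : ℝ≥0∞) := by norm_num
  · -- k ≥ 1
    have hpt : (fun ω => ((frogStep v (fun l j => ξ n l j ω) k : ℕ) : ℝ≥0∞))
        = fun ω => (Bᶜ.indicator (cnt k true) ω + Bᶜ.indicator (cnt (k - 1) false) ω)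
          + (B.indicator (cnt (k + 1) true) ω + B.indicator (cnt k false) ω) := by
      funext ω
      rw [frogStep_apply]
      by_cases hω : ω ∈ B
      · rw [if_neg ((hcond ω).mp hω)]
        rw [Set.indicator_of_notMem (by simpa using hω), Set.indicator_of_notMem
          (by simpa using hω), Set.indicator_of_mem hω, Set.indicator_of_mem hω]
        simp only [zero_add, add_zero, hcnt, Rc, Lc]
        push_cast
        ring
      · rw [if_pos (by_contra fun hcon => hω ((hcond ω).mpr hcon)), if_neg hk]
        rw [Set.indicator_of_mem (Set.mem_compl hω), Set.indicator_of_mem (Set.mem_compl hω),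
          Set.indicator_of_notMem hω, Set.indicator_of_notMem hω]
        simp only [add_zero, hcnt, Rc, Lc]
        push_cast
        ring
    rw [hpt]
    rw [lintegral_add_left (((hmcnt k true).indicator hAmeas).fun_add
      ((hmcnt (k - 1) false).indicator hAmeas))]
    rw [lintegral_add_left ((hmcnt k true).indicator hAmeas)]
    rw [lintegral_add_left ((hmcnt (k + 1) true).indicator hBmeas)]
    rw [lintegral_indicator_count hc n v hAmeas k true,
      lintegral_indicator_count hc n v hAmeas (k - 1) false,
      lintegral_indicator_count hc n v hBmeas (k + 1) true,
      lintegral_indicator_count hc n v hBmeas k false]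
    -- group 1 + group 4
    have h14 : ∑ j ∈ Finset.range (v k), P (Bᶜ ∩ {ω | ξ n k j ω = true})
        + ∑ j ∈ Finset.range (v k), P (B ∩ {ω | ξ n k j ω = false})
        ≤ pe p * (v k : ℝ≥0∞) := by
      rw [← Finset.sum_add_distrib]
      calc ∑ j ∈ Finset.range (v k),
            (P (Bᶜ ∩ {ω | ξ n k j ω = true}) + P (B ∩ {ω | ξ n k j ω = false}))
          ≤ ∑ _j ∈ Finset.range (v k), pe p := by
            apply Finset.sum_le_sum
            intro j _
            have hTmeas := measurableSet_coin hc n k j true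
            have hdiff : Bᶜ ∩ {ω | ξ n k j ω = true}
                = {ω | ξ n k j ω = true} \ (B ∩ {ω | ξ n k j ω = true}) := by
              ext ω
              simp only [Set.mem_inter_iff, Set.mem_compl_iff, Set.mem_diff,
                Set.mem_setOf_eq]
              tauto
            have hPA : P (Bᶜ ∩ {ω | ξ n k j ω = true})
                = pe p - qe p ^ (v 0) * pe p := by
              rw [hdiff, measure_diff Set.inter_subset_right
                (hBmeas.inter hTmeas).nullMeasurableSet (measure_ne_top _ _)]
              rw [hB, prob_Bev_inter_coin hc n (v 0) k j hk true,
                prob_coin hc n k j true]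
              simp
            have hPB : P (B ∩ {ω | ξ n k j ω = false}) = qe p ^ (v 0) * qe p := by
              rw [hB, prob_Bev_inter_coin hc n (v 0) k j hk false]
              simp
            rw [hPA, hPB]
            exact sc1 hp hp1 (pow_le_one' qe_le_one (v 0))
      _ = pe p * (v k : ℝ≥0∞) := by
            rw [Finset.sum_const, Finset.card_range, nsmul_eq_mul, mul_comm]
    -- group 2
    have hg2 : ∑ j ∈ Finset.range (v (k - 1)), P (Bᶜ ∩ {ω | ξ n (k - 1) j ω = false})
        ≤ qe p * (v (k - 1) : ℝ≥0∞) := by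
      calc ∑ j ∈ Finset.range (v (k - 1)), P (Bᶜ ∩ {ω | ξ n (k - 1) j ω = false})
          ≤ ∑ _j ∈ Finset.range (v (k - 1)), qe p := by
            apply Finset.sum_le_sum
            intro j _
            calc P (Bᶜ ∩ {ω | ξ n (k - 1) j ω = false}) ≤ P {ω | ξ n (k - 1) j ω = false} :=
                  measure_mono Set.inter_subset_right
            _ = qe p := by rw [prob_coin hc n (k - 1) j false]; simp
      _ = qe p * (v (k - 1) : ℝ≥0∞) := by
            rw [Finset.sum_const, Finset.card_range, nsmul_eq_mul, mul_comm]
    calc ∑ j ∈ Finset.range (v k), P (Bᶜ ∩ {ω | ξ n k j ω = true})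
          + ∑ j ∈ Finset.range (v (k - 1)), P (Bᶜ ∩ {ω | ξ n (k - 1) j ω = false})
          + (∑ j ∈ Finset.range (v (k + 1)), P (B ∩ {ω | ξ n (k + 1) j ω = true})
            + ∑ j ∈ Finset.range (v k), P (B ∩ {ω | ξ n k j ω = false}))
        = (∑ j ∈ Finset.range (v k), P (Bᶜ ∩ {ω | ξ n k j ω = true})
            + ∑ j ∈ Finset.range (v k), P (B ∩ {ω | ξ n k j ω = false}))
          + ∑ j ∈ Finset.range (v (k - 1)), P (Bᶜ ∩ {ω | ξ n (k - 1) j ω = false})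
          + ∑ j ∈ Finset.range (v (k + 1)), P (B ∩ {ω | ξ n (k + 1) j ω = true}) := by ring
    _ ≤ pe p * (v k : ℝ≥0∞) + qe p * (v (k - 1) : ℝ≥0∞)
          + pe p * qe p ^ 2 * (v (k + 1) : ℝ≥0∞) := by
          exact add_le_add (add_le_add h14 hg2) hsum3
    _ = pe p * (v k : ℝ≥0∞) + (if k = 0 then 1 + qe p ^ 2 else qe p * (v (k - 1) : ℝ≥0∞))
          + pe p * qe p ^ 2 * (v (k + 1) : ℝ≥0∞) := by rw [if_neg hk]

end ConfigStep
end FrogAux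

namespace FrogAux
set_option linter.unusedSectionVars false
set_option maxHeartbeats 1000000

section Glue

variable {Ω : Type*} [MeasurableSpace Ω] {P : Measure Ω} [IsProbabilityMeasure P]
  {ξ : ℕ → ℕ → ℕ → Ω → Bool} {p : ℝ}

lemma lintegral_comp_fintype {A : Type*} [Fintype A] [MeasurableSpace A]
    (hA : ∀ y : A, MeasurableSet ({y} : Set A)) (X : Ω → A) (hX : Measurable X)
    (h : A → ℝ≥0∞) :
    ∫⁻ ω, h (X ω) ∂P = ∑ y : A, h y * P (X ⁻¹' {y}) := by
  classical
  have hpt : (fun ω => h (X ω))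
      = fun ω => ∑ y : A, (X ⁻¹' {y}).indicator (fun _ => h y) ω := by
    funext ω
    symm
    rw [Finset.sum_eq_single (X ω)]
    · rw [Set.indicator_of_mem (by simp : ω ∈ X ⁻¹' {X ω})]
    · intro y _ hy
      rw [Set.indicator_of_notMem]
      simp only [Set.mem_preimage, Set.mem_singleton_iff]
      exact fun hcontra => hy hcontra.symm
    · intro hcontra
      exact absurd (Finset.mem_univ _) hcontra
  rw [hpt, lintegral_finset_sum' _ (fun y _ =>
    (measurable_const.indicator (hX (hA y))).aemeasurable)]
  apply Finset.sum_congr rfl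
  intro y _
  rw [lintegral_indicator_const (hX (hA y))]

lemma lintegral_indep_factor {A B : Type*} [Fintype A] [Fintype B]
    [MeasurableSpace A] [MeasurableSpace B]
    (hA : ∀ y : A, MeasurableSet ({y} : Set A)) (hB : ∀ y : B, MeasurableSet ({y} : Set B))
    (X : Ω → A) (Y : Ω → B) (hX : Measurable X) (hY : Measurable Y)
    (hindep : IndepFun X Y P) (g : A → B → ℝ≥0∞) :
    ∫⁻ ω, g (X ω) (Y ω) ∂P = ∑ x : A, P (X ⁻¹' {x}) * ∫⁻ ω, g x (Y ω) ∂P := by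
  classical
  have hpt : (fun ω => g (X ω) (Y ω))
      = fun ω => ∑ x : A, ∑ y : B,
          ((X ⁻¹' {x}) ∩ (Y ⁻¹' {y})).indicator (fun _ => g x y) ω := by
    funext ω
    symm
    rw [Finset.sum_eq_single (X ω)]
    · rw [Finset.sum_eq_single (Y ω)]
      · rw [Set.indicator_of_mem (by simp : ω ∈ (X ⁻¹' {X ω}) ∩ (Y ⁻¹' {Y ω}))]
      · intro y _ hy
        rw [Set.indicator_of_notMem]
        simp only [Set.mem_inter_iff, Set.mem_preimage, Set.mem_singleton_iff]
        exact fun hcontra => hy hcontra.2.symm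
      · intro hcontra
        exact absurd (Finset.mem_univ _) hcontra
    · intro x _ hx
      apply Finset.sum_eq_zero
      intro y _
      rw [Set.indicator_of_notMem]
      simp only [Set.mem_inter_iff, Set.mem_preimage, Set.mem_singleton_iff]
      exact fun hcontra => hx hcontra.1.symm
    · intro hcontra
      exact absurd (Finset.mem_univ _) hcontra
  rw [hpt]
  rw [lintegral_finset_sum' _ (fun x _ => Finset.aemeasurable_fun_sum _ (fun y _ =>
    (measurable_const.indicator ((hX (hA x)).inter (hY (hB y)))).aemeasurable))]
  apply Finset.sum_congr rfl
  intro x _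
  rw [lintegral_finset_sum' _ (fun y _ =>
    (measurable_const.indicator ((hX (hA x)).inter (hY (hB y)))).aemeasurable)]
  rw [lintegral_comp_fintype hB Y hY (g x), Finset.mul_sum]
  apply Finset.sum_congr rfl
  intro y _
  rw [lintegral_indicator_const ((hX (hA x)).inter (hY (hB y)))]
  rw [hindep.measure_inter_preimage_eq_mul _ _ (hA x) (hB y)]
  ring

lemma measurableSet_boolPi {ι : Type*} [Countable ι] (y : ι → Bool) :
    MeasurableSet ({y} : Set (ι → Bool)) := by
  have : ({y} : Set (ι → Bool)) = ⋂ i, (fun f : ι → Bool => f i) ⁻¹' {y i} := by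
    ext f
    simp [funext_iff]
  rw [this]
  exact MeasurableSet.iInter fun i => (measurable_pi_apply i) (measurableSet_singleton _)

end Glue
end FrogAux

namespace FrogAux
set_option linter.unusedSectionVars false
set_option maxHeartbeats 1000000

section MainStep

variable {Ω : Type*} [MeasurableSpace Ω] {P : Measure Ω} [IsProbabilityMeasure P]
  {ξ : ℕ → ℕ → ℕ → Ω → Bool} {p : ℝ}

lemma step_bound (hc : IsFrogCoins P ξ p) (hp : 1 / 2 < p) (hp1 : p < 1) (n k : ℕ) :
    ∫⁻ ω, ((frogConfig (fun t l j => ξ t l j ω) (n + 1) k : ℕ) : ℝ≥0∞) ∂P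
      ≤ pe p * ∫⁻ ω, ((frogConfig (fun t l j => ξ t l j ω) n k : ℕ) : ℝ≥0∞) ∂P
        + (if k = 0 then 1 + qe p ^ 2
            else qe p * ∫⁻ ω, ((frogConfig (fun t l j => ξ t l j ω) n (k - 1) : ℕ) : ℝ≥0∞) ∂P)
        + pe p * qe p ^ 2
          * ∫⁻ ω, ((frogConfig (fun t l j => ξ t l j ω) n (k + 1) : ℕ) : ℝ≥0∞) ∂P := by
  classical
  set I : Finset (ℕ × ℕ × ℕ) :=
    Finset.range n ×ˢ (Finset.range (n + k + 2) ×ˢ Finset.range (3 ^ n)) with hI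
  set J : Finset (ℕ × ℕ × ℕ) :=
    ({n} : Finset ℕ) ×ˢ (Finset.range (k + 2) ×ˢ Finset.range (3 ^ n)) with hJ
  set X : Ω → ({i // i ∈ I} → Bool) :=
    fun ω i => ξ (↑i : ℕ × ℕ × ℕ).1 (↑i : ℕ × ℕ × ℕ).2.1 (↑i : ℕ × ℕ × ℕ).2.2 ω with hX
  set Y : Ω → ({i // i ∈ J} → Bool) :=
    fun ω i => ξ (↑i : ℕ × ℕ × ℕ).1 (↑i : ℕ × ℕ × ℕ).2.1 (↑i : ℕ × ℕ × ℕ).2.2 ω with hY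
  set Φ : ({i // i ∈ I} → Bool) → ℕ → ℕ := fun x l =>
    frogConfig (fun t m j => if h : (t, m, j) ∈ I then x ⟨(t, m, j), h⟩ else false) n l
    with hΦ
  have key1 : ∀ (ω : Ω) (l : ℕ), l ≤ k + 1 →
      frogConfig (fun t m j => ξ t m j ω) n l = Φ (X ω) l := by
    intro ω l hl
    apply frogConfig_congr
    intro t m j ht hm hj
    have hmem : ((t, m, j) : ℕ × ℕ × ℕ) ∈ I := by
      rw [hI]
      simp only [Finset.mem_product, Finset.mem_range]
      refine ⟨ht, by omega, ?_⟩
      calc j < 3 ^ t := hj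
      _ ≤ 3 ^ n := Nat.pow_le_pow_right (by norm_num) (by omega)
    rw [dif_pos hmem]
  have key2 : ∀ ω : Ω, frogConfig (fun t l j => ξ t l j ω) (n + 1) k
      = frogStep (Φ (X ω)) (fun l j => ξ n l j ω) k := by
    intro ω
    show frogStep (frogConfig (fun t l j => ξ t l j ω) n) (fun l j => ξ n l j ω) k = _
    exact frogStep_congr_levels _ _ _ _ (fun l hl => key1 ω l hl)
  set Hx : ({i // i ∈ I} → Bool) → ({i // i ∈ J} → Bool) → ℕ := fun x y =>
    frogStep (Φ x) (fun l j => if h : ((n, l, j) : ℕ × ℕ × ℕ) ∈ J then y ⟨(n, l, j), h⟩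
      else false) k with hHx
  have key3 : ∀ (ω : Ω) (x : {i // i ∈ I} → Bool),
      frogStep (Φ x) (fun l j => ξ n l j ω) k = Hx x (Y ω) := by
    intro ω x
    apply frogStep_congr_coins
    intro l j hl hj
    have hmem : ((n, l, j) : ℕ × ℕ × ℕ) ∈ J := by
      rw [hJ]
      simp only [Finset.mem_product, Finset.mem_singleton, Finset.mem_range]
      exact ⟨by simp, by omega, lt_of_lt_of_le hj (frogConfig_le _ n l)⟩
    rw [dif_pos hmem]
  have hdisj : Disjoint I J := by
    rw [Finset.disjoint_left]
    intro x hxI hxJ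
    rw [hI] at hxI
    rw [hJ] at hxJ
    simp only [Finset.mem_product, Finset.mem_range, Finset.mem_singleton] at hxI hxJ
    omega
  have hXmeas : Measurable X := measurable_pi_lambda _ (fun i => hc.meas _ _ _)
  have hYmeas : Measurable Y := measurable_pi_lambda _ (fun i => hc.meas _ _ _)
  have hindep : IndepFun X Y P :=
    hc.indep.indepFun_finset I J hdisj (fun i => hc.meas i.1 i.2.1 i.2.2)
  have hmain : ∫⁻ ω, ((frogConfig (fun t l j => ξ t l j ω) (n + 1) k : ℕ) : ℝ≥0∞) ∂P
      = ∑ x : {i // i ∈ I} → Bool,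
          P (X ⁻¹' {x}) * ∫⁻ ω, ((Hx x (Y ω) : ℕ) : ℝ≥0∞) ∂P := by
    have hrw : (fun ω => ((frogConfig (fun t l j => ξ t l j ω) (n + 1) k : ℕ) : ℝ≥0∞))
        = fun ω => ((Hx (X ω) (Y ω) : ℕ) : ℝ≥0∞) := by
      funext ω
      rw [key2 ω, key3 ω (X ω)]
    rw [hrw]
    exact lintegral_indep_factor (fun y => measurableSet_boolPi y)
      (fun y => measurableSet_boolPi y) X Y hXmeas hYmeas hindep
      (fun x y => ((Hx x y : ℕ) : ℝ≥0∞))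
  have hback : ∀ x : {i // i ∈ I} → Bool,
      ∫⁻ ω, ((Hx x (Y ω) : ℕ) : ℝ≥0∞) ∂P
        = ∫⁻ ω, ((frogStep (Φ x) (fun l j => ξ n l j ω) k : ℕ) : ℝ≥0∞) ∂P := by
    intro x
    apply lintegral_congr
    intro ω
    rw [key3 ω x]
  have hatom : ∀ x : {i // i ∈ I} → Bool,
      P (X ⁻¹' {x}) * ∫⁻ ω, ((frogStep (Φ x) (fun l j => ξ n l j ω) k : ℕ) : ℝ≥0∞) ∂P
        ≤ P (X ⁻¹' {x}) * (pe p * (Φ x k : ℝ≥0∞)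
            + (if k = 0 then 1 + qe p ^ 2 else qe p * (Φ x (k - 1) : ℝ≥0∞))
            + pe p * qe p ^ 2 * (Φ x (k + 1) : ℝ≥0∞)) := by
    intro x
    rcases eq_or_ne (P (X ⁻¹' {x})) 0 with h0 | h0
    · rw [h0, zero_mul, zero_mul]
    · apply mul_le_mul_right
      obtain ⟨ω₀, hω₀⟩ := nonempty_of_measure_ne_zero h0
      have hXx : X ω₀ = x := hω₀
      have hv0 : 1 ≤ Φ x 0 := by
        rw [← hXx, ← key1 ω₀ 0 (by omega)]
        exact frogConfig_zero_pos _ n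
      have hP2 : Φ x 0 = 1 → Φ x (k + 1) = 0 := by
        intro h1
        rw [← hXx, ← key1 ω₀ (k + 1) (by omega)]
        apply frogConfig_eq_single _ n ?_ (k + 1) (by omega)
        rw [key1 ω₀ 0 (by omega), hXx]
        exact h1
      exact config_step hc hp hp1 n k (Φ x) hv0 hP2
  have hre : ∀ l : ℕ, l ≤ k + 1 →
      ∑ x : {i // i ∈ I} → Bool, P (X ⁻¹' {x}) * (Φ x l : ℝ≥0∞)
        = ∫⁻ ω, ((frogConfig (fun t m j => ξ t m j ω) n l : ℕ) : ℝ≥0∞) ∂P := by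
    intro l hl
    have hfin := lintegral_comp_fintype (P := P) (fun y => measurableSet_boolPi y) X hXmeas
      (fun x => (Φ x l : ℝ≥0∞))
    have hcong : ∫⁻ ω, ((Φ (X ω) l : ℕ) : ℝ≥0∞) ∂P
        = ∫⁻ ω, ((frogConfig (fun t m j => ξ t m j ω) n l : ℕ) : ℝ≥0∞) ∂P := by
      apply lintegral_congr
      intro ω
      rw [← key1 ω l hl]
    rw [← hcong, hfin]
    apply Finset.sum_congr rfl
    intro x _
    rw [mul_comm]
  have hone : ∑ x : {i // i ∈ I} → Bool, P (X ⁻¹' {x}) = 1 := by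
    have hfin := lintegral_comp_fintype (P := P) (fun y => measurableSet_boolPi y) X hXmeas
      (fun _ => (1 : ℝ≥0∞))
    simp only [lintegral_one, measure_univ, one_mul] at hfin
    exact hfin.symm
  -- put everything together
  rw [hmain]
  calc ∑ x : {i // i ∈ I} → Bool, P (X ⁻¹' {x}) * ∫⁻ ω, ((Hx x (Y ω) : ℕ) : ℝ≥0∞) ∂P
      ≤ ∑ x : {i // i ∈ I} → Bool, P (X ⁻¹' {x}) * (pe p * (Φ x k : ℝ≥0∞)
          + (if k = 0 then 1 + qe p ^ 2 else qe p * (Φ x (k - 1) : ℝ≥0∞))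
          + pe p * qe p ^ 2 * (Φ x (k + 1) : ℝ≥0∞)) := by
        apply Finset.sum_le_sum
        intro x _
        rw [hback x]
        exact hatom x
  _ = ∑ x : {i // i ∈ I} → Bool, (pe p * (P (X ⁻¹' {x}) * (Φ x k : ℝ≥0∞))
          + P (X ⁻¹' {x}) * (if k = 0 then 1 + qe p ^ 2 else qe p * (Φ x (k - 1) : ℝ≥0∞))
          + pe p * qe p ^ 2 * (P (X ⁻¹' {x}) * (Φ x (k + 1) : ℝ≥0∞))) := by
        apply Finset.sum_congr rfl
        intro x _
        ring
  _ = pe p * (∑ x : {i // i ∈ I} → Bool, P (X ⁻¹' {x}) * (Φ x k : ℝ≥0∞))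
        + (∑ x : {i // i ∈ I} → Bool, P (X ⁻¹' {x})
            * (if k = 0 then 1 + qe p ^ 2 else qe p * (Φ x (k - 1) : ℝ≥0∞)))
        + pe p * qe p ^ 2
          * (∑ x : {i // i ∈ I} → Bool, P (X ⁻¹' {x}) * (Φ x (k + 1) : ℝ≥0∞)) := by
        rw [Finset.sum_add_distrib, Finset.sum_add_distrib, ← Finset.mul_sum, ← Finset.mul_sum]
  _ ≤ pe p * ∫⁻ ω, ((frogConfig (fun t l j => ξ t l j ω) n k : ℕ) : ℝ≥0∞) ∂P
        + (if k = 0 then 1 + qe p ^ 2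
            else qe p * ∫⁻ ω, ((frogConfig (fun t l j => ξ t l j ω) n (k - 1) : ℕ) : ℝ≥0∞) ∂P)
        + pe p * qe p ^ 2
          * ∫⁻ ω, ((frogConfig (fun t l j => ξ t l j ω) n (k + 1) : ℕ) : ℝ≥0∞) ∂P := by
        apply add_le_add
        apply add_le_add
        · rw [hre k (by omega)]
        · by_cases hk : k = 0
          · simp only [hk, if_true]
            apply le_of_eq
            calc ∑ x : {i // i ∈ I} → Bool, P (X ⁻¹' {x}) * (1 + qe p ^ 2)
                = (∑ x : {i // i ∈ I} → Bool, P (X ⁻¹' {x})) * (1 + qe p ^ 2) := by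
                  rw [Finset.sum_mul]
            _ = 1 + qe p ^ 2 := by rw [hone, one_mul]
          · simp only [hk, if_false]
            have : ∑ x : {i // i ∈ I} → Bool,
                P (X ⁻¹' {x}) * (qe p * (Φ x (k - 1) : ℝ≥0∞))
                = qe p * ∑ x : {i // i ∈ I} → Bool, P (X ⁻¹' {x}) * (Φ x (k - 1) : ℝ≥0∞) := by
              rw [Finset.mul_sum]
              apply Finset.sum_congr rfl
              intro x _
              ring
            rw [this, hre (k - 1) (by omega)]
        · rw [hre (k + 1) (by omega)]

end MainStep
end FrogAux

namespace FrogAux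
set_option linter.unusedSectionVars false
set_option maxHeartbeats 1000000

section Final

variable {Ω : Type*} [MeasurableSpace Ω] {P : Measure Ω} [IsProbabilityMeasure P]
  {ξ : ℕ → ℕ → ℕ → Ω → Bool} {p : ℝ}

lemma pe_ne_zero (hp : 1 / 2 < p) : pe p ≠ 0 := by
  rw [pe]
  exact (ENNReal.ofReal_pos.mpr (by linarith)).ne'

lemma pe_ne_top : pe p ≠ ∞ := ENNReal.ofReal_ne_top

lemma qe_ne_zero (hp1 : p < 1) : qe p ≠ 0 := by
  rw [qe]
  have hlt : ENNReal.ofReal p < 1 := by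
    rw [← ENNReal.ofReal_one]
    exact (ENNReal.ofReal_lt_ofReal_iff (by norm_num)).mpr hp1
  exact (tsub_pos_of_lt hlt).ne'

lemma qe_ne_top : qe p ≠ ∞ := (tsub_le_self.trans_lt (by norm_num : (1:ℝ≥0∞) < ∞)).ne

lemma key_identity (hp1 : p < 1) : pe p + pe p * qe p + qe p * qe p = 1 := by
  have h1 : pe p * qe p + qe p * qe p = qe p := by
    rw [← add_mul, pe_add_qe hp1, one_mul]
  rw [add_assoc, h1, pe_add_qe hp1]

lemma Me_ge_one (hp : 1 / 2 < p) (hp1 : p < 1) :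
    (1 : ℝ≥0∞) ≤ (1 + qe p ^ 2) / (pe p * qe p) := by
  rw [ENNReal.le_div_iff_mul_le (Or.inl (mul_ne_zero (pe_ne_zero hp) (qe_ne_zero hp1)))
    (Or.inl (ENNReal.mul_ne_top pe_ne_top qe_ne_top)), one_mul]
  calc pe p * qe p ≤ 1 * 1 := mul_le_mul' (pe_le_one hp1) qe_le_one
  _ = 1 := by norm_num
  _ ≤ 1 + qe p ^ 2 := le_self_add

lemma Me_mul (hp : 1 / 2 < p) (hp1 : p < 1) :
    pe p * qe p * ((1 + qe p ^ 2) / (pe p * qe p)) = 1 + qe p ^ 2 :=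
  ENNReal.mul_div_cancel (mul_ne_zero (pe_ne_zero hp) (qe_ne_zero hp1))
    (ENNReal.mul_ne_top pe_ne_top qe_ne_top)

/-- the main induction : `pe^k * E[a_n(k)] ≤ (1+qe²)/(pe·qe)` -/
lemma u_bound (hc : IsFrogCoins P ξ p) (hp : 1 / 2 < p) (hp1 : p < 1) :
    ∀ n k : ℕ, pe p ^ k * ∫⁻ ω, ((frogConfig (fun t l j => ξ t l j ω) n k : ℕ) : ℝ≥0∞) ∂P
      ≤ (1 + qe p ^ 2) / (pe p * qe p) := by
  intro n
  induction n with
  | zero =>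
    intro k
    have hconst : ∫⁻ ω, ((frogConfig (fun t l j => ξ t l j ω) 0 k : ℕ) : ℝ≥0∞) ∂P
        = ((if k = 0 then 1 else 0 : ℕ) : ℝ≥0∞) := by
      have h0 : (fun ω : Ω => ((frogConfig (fun t l j => ξ t l j ω) 0 k : ℕ) : ℝ≥0∞))
          = fun _ => ((if k = 0 then 1 else 0 : ℕ) : ℝ≥0∞) := rfl
      rw [h0, lintegral_const, measure_univ, mul_one]
    rw [hconst]
    by_cases hk : k = 0
    · subst hk
      simpa using Me_ge_one hp hp1
    · simp [hk]
  | succ n ih =>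
    intro k
    have hstep := step_bound hc hp hp1 n k
    set Me := (1 + qe p ^ 2) / (pe p * qe p) with hMe
    have hmain : pe p ^ k * ∫⁻ ω, ((frogConfig (fun t l j => ξ t l j ω) (n + 1) k : ℕ) : ℝ≥0∞) ∂P
        ≤ pe p ^ k * (pe p * ∫⁻ ω, ((frogConfig (fun t l j => ξ t l j ω) n k : ℕ) : ℝ≥0∞) ∂P
          + (if k = 0 then 1 + qe p ^ 2
              else qe p * ∫⁻ ω, ((frogConfig (fun t l j => ξ t l j ω) n (k - 1) : ℕ) : ℝ≥0∞) ∂P)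
          + pe p * qe p ^ 2
            * ∫⁻ ω, ((frogConfig (fun t l j => ξ t l j ω) n (k + 1) : ℕ) : ℝ≥0∞) ∂P) :=
      mul_le_mul_right hstep _
    apply hmain.trans
    rw [mul_add, mul_add]
    have hterm1 : pe p ^ k
        * (pe p * ∫⁻ ω, ((frogConfig (fun t l j => ξ t l j ω) n k : ℕ) : ℝ≥0∞) ∂P)
        ≤ pe p * Me := by
      rw [show pe p ^ k * (pe p * ∫⁻ ω, ((frogConfig (fun t l j => ξ t l j ω) n k : ℕ) : ℝ≥0∞) ∂P)
        = pe p * (pe p ^ k * ∫⁻ ω, ((frogConfig (fun t l j => ξ t l j ω) n k : ℕ) : ℝ≥0∞) ∂P)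
        from by ring]
      exact mul_le_mul_right (ih k) _
    have hterm3 : pe p ^ k * (pe p * qe p ^ 2
          * ∫⁻ ω, ((frogConfig (fun t l j => ξ t l j ω) n (k + 1) : ℕ) : ℝ≥0∞) ∂P)
        ≤ qe p * qe p * Me := by
      rw [show pe p ^ k * (pe p * qe p ^ 2
          * ∫⁻ ω, ((frogConfig (fun t l j => ξ t l j ω) n (k + 1) : ℕ) : ℝ≥0∞) ∂P)
        = qe p * qe p * (pe p ^ (k + 1)
          * ∫⁻ ω, ((frogConfig (fun t l j => ξ t l j ω) n (k + 1) : ℕ) : ℝ≥0∞) ∂P)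
        from by rw [pow_succ]; ring]
      exact mul_le_mul_right (ih (k + 1)) _
    have hterm2 : pe p ^ k
        * (if k = 0 then 1 + qe p ^ 2
            else qe p * ∫⁻ ω, ((frogConfig (fun t l j => ξ t l j ω) n (k - 1) : ℕ) : ℝ≥0∞) ∂P)
        ≤ pe p * qe p * Me := by
      by_cases hk : k = 0
      · subst hk
        rw [if_pos rfl, pow_zero, one_mul, hMe]
        exact (Me_mul hp hp1).ge
      · rw [if_neg hk]
        obtain ⟨k', rfl⟩ : ∃ k', k = k' + 1 := ⟨k - 1, by omega⟩
        rw [show pe p ^ (k' + 1)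
            * (qe p * ∫⁻ ω, ((frogConfig (fun t l j => ξ t l j ω) n (k' + 1 - 1) : ℕ) : ℝ≥0∞) ∂P)
          = pe p * qe p * (pe p ^ k'
            * ∫⁻ ω, ((frogConfig (fun t l j => ξ t l j ω) n k' : ℕ) : ℝ≥0∞) ∂P)
          from by rw [pow_succ]; norm_num; ring]
        exact mul_le_mul_right (ih k') _
    calc pe p ^ k * (pe p * ∫⁻ ω, ((frogConfig (fun t l j => ξ t l j ω) n k : ℕ) : ℝ≥0∞) ∂P)
          + pe p ^ k * (if k = 0 then 1 + qe p ^ 2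
              else qe p * ∫⁻ ω, ((frogConfig (fun t l j => ξ t l j ω) n (k - 1) : ℕ) : ℝ≥0∞) ∂P)
          + pe p ^ k * (pe p * qe p ^ 2
            * ∫⁻ ω, ((frogConfig (fun t l j => ξ t l j ω) n (k + 1) : ℕ) : ℝ≥0∞) ∂P)
        ≤ pe p * Me + pe p * qe p * Me + qe p * qe p * Me :=
          add_le_add (add_le_add hterm1 hterm2) hterm3
    _ = (pe p + pe p * qe p + qe p * qe p) * Me := by ring
    _ = Me := by rw [key_identity hp1, one_mul]

end Final
end FrogAux

open FrogAux in
/-- **Lemma 6, refined form.**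
For `1/2 < p < 1` and all `n, k ∈ ℕ₀`, the expected number `E[a_n(k)]` of active frogs at
distance `2k` below the maximum in the modified frog model is at most
`(2 - p)·p / ((1 - p)·(2p - 1)·p^k)`. -/
theorem modified_frog_expected_level_bound
    {Ω : Type*} [MeasurableSpace Ω] (P : Measure Ω) [IsProbabilityMeasure P]
    (ξ : ℕ → ℕ → ℕ → Ω → Bool) (p : ℝ) (hcoins : IsFrogCoins P ξ p)
    (hp : 1 / 2 < p) (hp1 : p < 1) (n k : ℕ) :
    ∫⁻ ω, (frogConfig (fun t k j => ξ t k j ω) n k : ℝ≥0∞) ∂P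
      ≤ ENNReal.ofReal ((2 - p) * p / ((1 - p) * (2 * p - 1) * p ^ k)) := by
  have hp0 : (0 : ℝ) < p := by linarith
  have hq0 : (0 : ℝ) < 1 - p := by linarith
  have hpk : (0 : ℝ) < p ^ k := pow_pos hp0 k
  have h2p : (0 : ℝ) < 2 * p - 1 := by linarith
  -- step 1 : the key bound
  have hub := u_bound hcoins hp hp1 n k
  have hIle : ∫⁻ ω, ((frogConfig (fun t l j => ξ t l j ω) n k : ℕ) : ℝ≥0∞) ∂P
      ≤ ((1 + qe p ^ 2) / (pe p * qe p)) / pe p ^ k := by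
    rw [ENNReal.le_div_iff_mul_le (Or.inl (pow_ne_zero k (pe_ne_zero hp)))
      (Or.inl (ENNReal.pow_ne_top pe_ne_top))]
    rwa [mul_comm]
  -- step 2 : rewrite the bound as an `ofReal`
  have hqe : qe p = ENNReal.ofReal (1 - p) := by
    rw [qe, ENNReal.ofReal_sub 1 hp0.le, ENNReal.ofReal_one]
  have hnum : (1 : ℝ≥0∞) + qe p ^ 2 = ENNReal.ofReal (1 + (1 - p) ^ 2) := by
    rw [hqe, ← ENNReal.ofReal_pow hq0.le, ENNReal.ofReal_add (by norm_num) (by positivity),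
      ENNReal.ofReal_one]
  have hden : pe p * qe p = ENNReal.ofReal (p * (1 - p)) := by
    rw [pe, hqe, ENNReal.ofReal_mul hp0.le]
  have hpek : pe p ^ k = ENNReal.ofReal (p ^ k) := by
    rw [pe, ENNReal.ofReal_pow hp0.le]
  have hMe : ((1 + qe p ^ 2) / (pe p * qe p)) / pe p ^ k
      = ENNReal.ofReal ((1 + (1 - p) ^ 2) / (p * (1 - p)) / p ^ k) := by
    rw [hnum, hden, hpek, ← ENNReal.ofReal_div_of_pos (by positivity),
      ← ENNReal.ofReal_div_of_pos hpk]
  -- step 3 : the real inequality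
  have hkey : (1 + (1 - p) ^ 2) * (2 * p - 1) ≤ (2 - p) * p ^ 2 := by nlinarith [sq_nonneg (3 * p - 2), hq0]
  have hreal : (1 + (1 - p) ^ 2) / (p * (1 - p)) / p ^ k
      ≤ (2 - p) * p / ((1 - p) * (2 * p - 1) * p ^ k) := by
    rw [div_div, div_le_div_iff₀ (by positivity) (by positivity)]
    have hL : (1 + (1 - p) ^ 2) * ((1 - p) * (2 * p - 1) * p ^ k)
        = ((1 + (1 - p) ^ 2) * (2 * p - 1)) * ((1 - p) * p ^ k) := by ring
    have hR : (2 - p) * p * (p * (1 - p) * p ^ k)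
        = ((2 - p) * p ^ 2) * ((1 - p) * p ^ k) := by ring
    rw [hL, hR]
    exact mul_le_mul_of_nonneg_right hkey (by positivity)
  calc ∫⁻ ω, ((frogConfig (fun t l j => ξ t l j ω) n k : ℕ) : ℝ≥0∞) ∂P
      ≤ ((1 + qe p ^ 2) / (pe p * qe p)) / pe p ^ k := hIle
  _ = ENNReal.ofReal ((1 + (1 - p) ^ 2) / (p * (1 - p)) / p ^ k) := hMe
  _ ≤ ENNReal.ofReal ((2 - p) * p / ((1 - p) * (2 * p - 1) * p ^ k)) :=
      ENNReal.ofReal_le_ofReal hreal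
end
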